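/- arXiv:cs/0509100 — 2 statements merged into one kernel-verified Lean document; each statement's English description precedes it below -/
import Mathlib

section
/- There exists a finite simple bipartite graph of maximum degree at most 3, of girth 6, with two designated distinct edges e (the input edge) and e' (an output edge), such that (i) in every distance-2 edge coloring of the graph with 5 colors, the edges e and e' receive the same color, and (ii) for each of the 5 colors there is a distance-2 edge coloring with 5 colors assigning that color to e. (This is the defining property of the fanout gadget.) -/
open SimpleGraph

/-- Two edges `e` and `f` of a simple graph `G` are within distance 2 of each other:
they are distinct edges of `G` and either they are adjacent (share an endpoint) or
there is some other edge of `G` adjacent to both of them. -/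
def WithinDist2 {V : Type*} (G : SimpleGraph V) (e f : Sym2 V) : Prop :=
  e ∈ G.edgeSet ∧ f ∈ G.edgeSet ∧ e ≠ f ∧
    ((∃ v, v ∈ e ∧ v ∈ f) ∨
      ∃ g ∈ G.edgeSet, g ≠ e ∧ g ≠ f ∧ (∃ v, v ∈ e ∧ v ∈ g) ∧ (∃ v, v ∈ g ∧ v ∈ f))

/-- A distance-2 edge coloring (strong edge coloring) of `G` with `k` colors:
any two distinct edges within distance 2 of each other receive distinct colors. -/
def IsD2EdgeColoring {V : Type*} (G : SimpleGraph V) (k : ℕ) (c : Sym2 V → Fin k) : Prop :=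
  ∀ e f : Sym2 V, WithinDist2 G e f → c e ≠ c f

def edgeL : List (Fin 20 × Fin 20) := [(0,1), (1,2), (2,3), (3,4), (4,5), (5,6), (6,7), (7,8), (8,9), (0,9), (0,10), (1,11), (2,12), (3,13), (4,14), (5,15), (6,16), (7,17), (8,18), (9,19), (10,13), (11,14), (12,15), (13,16), (14,17), (15,18), (16,19), (10,17), (11,18), (12,19)]

def adjB (u v : Fin 20) : Bool := edgeL.any (fun p => (p.1 == u && p.2 == v) || (p.1 == v && p.2 == u))

def Gr : SimpleGraph (Fin 20) := 
  { Adj := fun u v => adjB u v = true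
    symm := ⟨fun u v h => by
      have H : ∀ u v : Fin 20, adjB u v = true → adjB v u = true := by decide
      exact H u v h⟩
    loopless := ⟨fun v h => by
      have H : ∀ v : Fin 20, ¬ adjB v v = true := by decide
      exact H v h⟩ }

instance : DecidableRel Gr.Adj := fun u v => instDecidableEqBool (adjB u v) true



def par (v : Fin 20) : Bool := if v.val < 10 then v.val % 2 == 0 else v.val % 2 == 1

lemma hpar : ∀ u v : Fin 20, adjB u v = true → par u ≠ par v := by decide

lemma walk_parity {V : Type} {G : SimpleGraph V} (f : V → Bool)
    (hf : ∀ u v, G.Adj u v → f u ≠ f v) :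
    ∀ {u v : V} (w : G.Walk u v), Even w.length ↔ (f u = f v) := by
  intro u v w
  induction w with
  | nil => simp
  | @cons u m v h p ih =>
    rw [Walk.length_cons, Nat.even_add_one, ih]
    have h2 := hf _ _ h
    cases hu : f u <;> cases hm : f m <;> cases hv : f v <;> simp_all

lemma noC4 : ∀ a b : Fin 20, adjB a b = true → ∀ c, adjB b c = true → a ≠ c →
    ∀ d, adjB c d = true → b ≠ d → adjB d a = true → False := by decide

lemma no4cycle (a : Fin 20) (w : Gr.Walk a a) (hw : w.IsCycle) : w.length ≠ 4 := by
  intro hl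
  rw [Walk.isCycle_def] at hw
  obtain ⟨ht, hnil, hnd⟩ := hw
  cases w with
  | nil => simp at hl
  | cons h1 p =>
    cases p with
    | nil => simp at hl
    | cons h2 q =>
      cases q with
      | nil => simp at hl
      | cons h3 r =>
        cases r with
        | nil => simp at hl
        | cons h4 s =>
          cases s with
          | cons h5 t => simp [Walk.length_cons] at hl
          | nil =>
            simp [Walk.support_cons] at hnd
            obtain ⟨⟨hbc, hbd, hba⟩, ⟨hcd, hca⟩, hda⟩ := hnd
            exact noC4 _ _ h1 _ h2 (fun h => hca h.symm) _ h3 hbd h4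

def c6 : Gr.Walk 0 0 :=
  .cons (show Gr.Adj 0 1 from rfl) (.cons (show Gr.Adj 1 2 from rfl)
    (.cons (show Gr.Adj 2 3 from rfl) (.cons (show Gr.Adj 3 13 from rfl)
      (.cons (show Gr.Adj 13 10 from rfl) (.cons (show Gr.Adj 10 0 from rfl) .nil)))))

lemma c6_cycle : c6.IsCycle := by
  rw [Walk.isCycle_def, Walk.isTrail_def]
  refine ⟨?_, by simp [c6], ?_⟩
  · decide
  · decide

lemma egirth_eq : Gr.egirth = 6 := by
  refine le_antisymm ?_ ?_
  · have h1 : Gr.egirth ≤ (c6.length : ℕ∞) := by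
      rw [egirth]
      exact iInf_le_of_le 0 (iInf_le_of_le c6 (iInf_le_of_le c6_cycle le_rfl))
    simpa [c6] using h1
  · rw [le_egirth]
    intro a w hw
    have heven : Even w.length := by
      rw [walk_parity par (fun u v h => hpar u v h) w]
    have h3 : 3 ≤ w.length := hw.three_le_length
    have h4 : w.length ≠ 4 := no4cycle a w hw
    have : 6 ≤ w.length := by
      rcases heven with ⟨k, hk⟩
      omega
    exact_mod_cast this

def colL : List (Fin 20 × Fin 20 × Fin 5) := [(0,1,0), (1,2,1), (2,3,2), (3,4,3), (4,5,4), (5,6,0), (6,7,1), (7,8,2), (8,9,3), (0,9,4), (0,10,2), (1,11,3), (2,12,4), (3,13,0), (4,14,1), (5,15,2), (6,16,3), (7,17,4), (8,18,0), (9,19,1), (10,13,1), (11,14,2), (12,15,3), (13,16,4), (14,17,0), (15,18,1), (16,19,2), (10,17,3), (11,18,4), (12,19,0)]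

def gB (u v : Fin 20) : Fin 5 :=
  (colL.findSome? (fun t => if (t.1 == u && t.2.1 == v) || (t.1 == v && t.2.1 == u) then some t.2.2 else none)).getD 0

lemma gB_symm : ∀ u v : Fin 20, gB u v = gB v u := by decide

def c0 : Sym2 (Fin 20) → Fin 5 := Sym2.lift ⟨gB, gB_symm⟩

def pEq (x y u v : Fin 20) : Prop := (x = u ∧ y = v) ∨ (x = v ∧ y = u)

instance (x y u v : Fin 20) : Decidable (pEq x y u v) := by unfold pEq; infer_instance

def conn (a b c d : Fin 20) : Prop :=
  (adjB a c = true ∧ ¬ pEq a c a b ∧ ¬ pEq a c c d) ∨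
  (adjB a d = true ∧ ¬ pEq a d a b ∧ ¬ pEq a d c d) ∨
  (adjB b c = true ∧ ¬ pEq b c a b ∧ ¬ pEq b c c d) ∨
  (adjB b d = true ∧ ¬ pEq b d a b ∧ ¬ pEq b d c d)

instance (a b c d : Fin 20) : Decidable (conn a b c d) := by unfold conn; infer_instance

lemma pEq_sym2 {x y u v : Fin 20} (h : pEq x y u v) : s(x,y) = s(u,v) := by
  rcases h with ⟨rfl, rfl⟩ | ⟨rfl, rfl⟩
  · rfl
  · exact Sym2.eq_swap

lemma sym2_eq_of_mem {V : Type*} {p q v1 v2 : V} (h1 : v1 ∈ s(p,q)) (h2 : v2 ∈ s(p,q))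
    (hne : v1 ≠ v2) : s(p,q) = s(v1,v2) := by
  rcases Sym2.mem_iff.mp h1 with rfl | rfl <;> rcases Sym2.mem_iff.mp h2 with rfl | rfl
  · exact absurd rfl hne
  · rfl
  · exact Sym2.eq_swap
  · exact absurd rfl hne

set_option maxHeartbeats 4000000 in
lemma key : ∀ a b : Fin 20, adjB a b = true → ∀ c d : Fin 20, adjB c d = true →
    gB a b = gB c d → ¬ pEq a b c d →
    ((a = c ∨ a = d ∨ b = c ∨ b = d) ∨ conn a b c d) → False := by decide

lemma c0_valid : IsD2EdgeColoring Gr 5 c0 := by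
  intro e f h
  obtain ⟨he, hf, hne, hor⟩ := h
  induction e using Sym2.ind with | _ a b =>
  induction f using Sym2.ind with | _ cc d =>
  rw [mem_edgeSet] at he hf
  have hne' : ¬ pEq a b cc d := fun hp => hne (pEq_sym2 hp)
  have hor' : ((a = cc ∨ a = d ∨ b = cc ∨ b = d) ∨ conn a b cc d) := ?_
  case _ => exact fun heq => key a b he cc d hf heq hne' hor'
  rcases hor with ⟨v, hv1, hv2⟩ | ⟨g, hg, hge, hgf, ⟨v1, hv1e, hv1g⟩, ⟨v2, hv2g, hv2f⟩⟩
  · left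
    rcases Sym2.mem_iff.mp hv1 with rfl | rfl <;> rcases Sym2.mem_iff.mp hv2 with rfl | rfl <;> tauto
  · by_cases hvv : v1 = v2
    · subst hvv
      left
      rcases Sym2.mem_iff.mp hv1e with rfl | rfl <;> rcases Sym2.mem_iff.mp hv2f with rfl | rfl <;> tauto
    · right
      induction g using Sym2.ind with | _ p q =>
      have hgeq : s(p,q) = s(v1,v2) := sym2_eq_of_mem hv1g hv2g hvv
      rw [hgeq] at hg hge hgf
      rw [mem_edgeSet] at hg
      have hadj : adjB v1 v2 = true := hg
      have h1 : ¬ pEq v1 v2 a b := fun hp => hge (pEq_sym2 hp)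
      have h2 : ¬ pEq v1 v2 cc d := fun hp => hgf (pEq_sym2 hp)
      unfold conn
      rcases Sym2.mem_iff.mp hv1e with rfl | rfl <;> rcases Sym2.mem_iff.mp hv2f with rfl | rfl <;> tauto

-- edge abbreviations
abbrev E0 : Sym2 (Fin 20) := s(0,1)
abbrev E1 : Sym2 (Fin 20) := s(1,2)
abbrev E2 : Sym2 (Fin 20) := s(2,3)
abbrev E3 : Sym2 (Fin 20) := s(3,4)
abbrev E4 : Sym2 (Fin 20) := s(4,5)
abbrev E5 : Sym2 (Fin 20) := s(5,6)
abbrev E6 : Sym2 (Fin 20) := s(6,7)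
abbrev E7 : Sym2 (Fin 20) := s(7,8)
abbrev E8 : Sym2 (Fin 20) := s(8,9)
abbrev E9 : Sym2 (Fin 20) := s(0,9)
abbrev E10 : Sym2 (Fin 20) := s(0,10)
abbrev E11 : Sym2 (Fin 20) := s(1,11)
abbrev E12 : Sym2 (Fin 20) := s(2,12)
abbrev E13 : Sym2 (Fin 20) := s(3,13)
abbrev E14 : Sym2 (Fin 20) := s(4,14)
abbrev E15 : Sym2 (Fin 20) := s(5,15)
abbrev E16 : Sym2 (Fin 20) := s(6,16)
abbrev E17 : Sym2 (Fin 20) := s(7,17)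
abbrev E18 : Sym2 (Fin 20) := s(8,18)
abbrev E19 : Sym2 (Fin 20) := s(9,19)
abbrev E20 : Sym2 (Fin 20) := s(10,13)
abbrev E21 : Sym2 (Fin 20) := s(11,14)
abbrev E22 : Sym2 (Fin 20) := s(12,15)
abbrev E23 : Sym2 (Fin 20) := s(13,16)
abbrev E24 : Sym2 (Fin 20) := s(14,17)
abbrev E25 : Sym2 (Fin 20) := s(15,18)
abbrev E26 : Sym2 (Fin 20) := s(16,19)
abbrev E27 : Sym2 (Fin 20) := s(10,17)
abbrev E28 : Sym2 (Fin 20) := s(11,18)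
abbrev E29 : Sym2 (Fin 20) := s(12,19)

lemma wd2A {V : Type} (G : SimpleGraph V) (a b c d : V) (h1 : G.Adj a b) (h2 : G.Adj c d)
    (hne : s(a,b) ≠ s(c,d)) (x : V) (hx : x ∈ s(a,b)) (hy : x ∈ s(c,d)) :
    WithinDist2 G s(a,b) s(c,d) :=
  ⟨(SimpleGraph.mem_edgeSet _).mpr h1, (SimpleGraph.mem_edgeSet _).mpr h2, hne, Or.inl ⟨x, hx, hy⟩⟩

lemma wd2B {V : Type} (G : SimpleGraph V) (a b c d p q : V) (h1 : G.Adj a b) (h2 : G.Adj c d)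
    (h3 : G.Adj p q) (hne : s(a,b) ≠ s(c,d)) (g1 : s(p,q) ≠ s(a,b)) (g2 : s(p,q) ≠ s(c,d))
    (x : V) (hx1 : x ∈ s(a,b)) (hx2 : x ∈ s(p,q)) (y : V) (hy1 : y ∈ s(p,q)) (hy2 : y ∈ s(c,d)) :
    WithinDist2 G s(a,b) s(c,d) :=
  ⟨(SimpleGraph.mem_edgeSet _).mpr h1, (SimpleGraph.mem_edgeSet _).mpr h2, hne,
    Or.inr ⟨s(p,q), (SimpleGraph.mem_edgeSet _).mpr h3, g1, g2, ⟨x, hx1, hx2⟩, ⟨y, hy1, hy2⟩⟩⟩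

set_option synthInstance.maxSize 2000 in
set_option maxHeartbeats 1000000 in
lemma pigE (a b c d e s : Fin 5) (h1 : a≠b) (h2 : a≠c) (h3 : a≠d) (h4 : a≠e) (h5 : b≠c)
    (h6 : b≠d) (h7 : b≠e) (h8 : c≠d) (h9 : c≠e) (h10 : d≠e)
    (s1 : s≠a) (s2 : s≠b) (s3 : s≠c) (s4 : s≠d) : s = e := by
  revert h1 h2 h3 h4 h5 h6 h7 h8 h9 h10 s1 s2 s3 s4; revert a b c d e s; decide

set_option synthInstance.maxSize 2000 in
set_option maxHeartbeats 1000000 in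
lemma pigE' (a b c d e s : Fin 5) (h1 : a≠b) (h2 : a≠c) (h3 : a≠d) (h4 : b≠c) (h5 : b≠d)
    (h6 : c≠d) (o1 : a≠e) (o2 : b≠e) (o3 : c≠e) (o4 : d≠e)
    (s1 : s≠a) (s2 : s≠b) (s3 : s≠c) (s4 : s≠d) : s = e := by
  revert h1 h2 h3 h4 h5 h6 o1 o2 o3 o4 s1 s2 s3 s4; revert a b c d e s; decide

set_option synthInstance.maxSize 2000 in
set_option maxHeartbeats 1000000 in
lemma pigF (a b c d e s : Fin 5) (h1 : a≠b) (h2 : a≠c) (h3 : a≠d) (h4 : a≠e) (h5 : b≠c)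
    (h6 : b≠d) (h7 : b≠e) (h8 : c≠d) (h9 : c≠e) (h10 : d≠e)
    (s1 : s≠a) (s2 : s≠b) (s3 : s≠c) (s4 : s≠d) (s5 : s≠e) : False := by
  revert h1 h2 h3 h4 h5 h6 h7 h8 h9 h10 s1 s2 s3 s4 s5; revert a b c d e s; decide

set_option synthInstance.maxSize 2000 in
set_option maxHeartbeats 1000000 in
lemma pick2 (a b c d e s : Fin 5) (h1 : a≠b) (h2 : a≠c) (h3 : a≠d) (h4 : a≠e) (h5 : b≠c)
    (h6 : b≠d) (h7 : b≠e) (h8 : c≠d) (h9 : c≠e) (h10 : d≠e)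
    (s1 : s≠a) (s2 : s≠b) (s3 : s≠c) : s = d ∨ s = e := by
  revert h1 h2 h3 h4 h5 h6 h7 h8 h9 h10 s1 s2 s3; revert a b c d e s; decide

set_option synthInstance.maxSize 2000 in
set_option maxHeartbeats 1000000 in
lemma pick3 (a b c d e s : Fin 5) (h1 : a≠b) (h2 : a≠c) (h3 : a≠d) (h4 : a≠e) (h5 : b≠c)
    (h6 : b≠d) (h7 : b≠e) (h8 : c≠d) (h9 : c≠e) (h10 : d≠e)
    (s1 : s≠a) (s2 : s≠b) : s = c ∨ s = d ∨ s = e := by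
  revert h1 h2 h3 h4 h5 h6 h7 h8 h9 h10 s1 s2; revert a b c d e s; decide

theorem forced (c : Sym2 (Fin 20) → Fin 5) (hc : IsD2EdgeColoring Gr 5 c) :
    c E0 = c E5 := by
  have w_0_1 : WithinDist2 Gr E0 E1 := wd2A Gr 0 1 1 2 rfl rfl (by decide) 1 (Sym2.mem_mk_right 0 1) (Sym2.mem_mk_left 1 2)
  have w_0_9 : WithinDist2 Gr E0 E9 := wd2A Gr 0 1 0 9 rfl rfl (by decide) 0 (Sym2.mem_mk_left 0 1) (Sym2.mem_mk_left 0 9)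
  have w_0_10 : WithinDist2 Gr E0 E10 := wd2A Gr 0 1 0 10 rfl rfl (by decide) 0 (Sym2.mem_mk_left 0 1) (Sym2.mem_mk_left 0 10)
  have w_0_11 : WithinDist2 Gr E0 E11 := wd2A Gr 0 1 1 11 rfl rfl (by decide) 1 (Sym2.mem_mk_right 0 1) (Sym2.mem_mk_left 1 11)
  have w_1_9 : WithinDist2 Gr E1 E9 := wd2B Gr 1 2 0 9 0 1 rfl rfl rfl (by decide) (by decide) (by decide) 1 (Sym2.mem_mk_left 1 2) (Sym2.mem_mk_right 0 1) 0 (Sym2.mem_mk_left 0 1) (Sym2.mem_mk_left 0 9)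
  have w_1_10 : WithinDist2 Gr E1 E10 := wd2B Gr 1 2 0 10 0 1 rfl rfl rfl (by decide) (by decide) (by decide) 1 (Sym2.mem_mk_left 1 2) (Sym2.mem_mk_right 0 1) 0 (Sym2.mem_mk_left 0 1) (Sym2.mem_mk_left 0 10)
  have w_1_11 : WithinDist2 Gr E1 E11 := wd2A Gr 1 2 1 11 rfl rfl (by decide) 1 (Sym2.mem_mk_left 1 2) (Sym2.mem_mk_left 1 11)
  have w_2_0 : WithinDist2 Gr E2 E0 := wd2B Gr 2 3 0 1 1 2 rfl rfl rfl (by decide) (by decide) (by decide) 2 (Sym2.mem_mk_left 2 3) (Sym2.mem_mk_right 1 2) 1 (Sym2.mem_mk_left 1 2) (Sym2.mem_mk_right 0 1)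
  have w_2_1 : WithinDist2 Gr E2 E1 := wd2A Gr 2 3 1 2 rfl rfl (by decide) 2 (Sym2.mem_mk_left 2 3) (Sym2.mem_mk_right 1 2)
  have w_2_3 : WithinDist2 Gr E2 E3 := wd2A Gr 2 3 3 4 rfl rfl (by decide) 3 (Sym2.mem_mk_right 2 3) (Sym2.mem_mk_left 3 4)
  have w_2_4 : WithinDist2 Gr E2 E4 := wd2B Gr 2 3 4 5 3 4 rfl rfl rfl (by decide) (by decide) (by decide) 3 (Sym2.mem_mk_right 2 3) (Sym2.mem_mk_left 3 4) 4 (Sym2.mem_mk_right 3 4) (Sym2.mem_mk_left 4 5)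
  have w_2_11 : WithinDist2 Gr E2 E11 := wd2B Gr 2 3 1 11 1 2 rfl rfl rfl (by decide) (by decide) (by decide) 2 (Sym2.mem_mk_left 2 3) (Sym2.mem_mk_right 1 2) 1 (Sym2.mem_mk_left 1 2) (Sym2.mem_mk_left 1 11)
  have w_2_13 : WithinDist2 Gr E2 E13 := wd2A Gr 2 3 3 13 rfl rfl (by decide) 3 (Sym2.mem_mk_right 2 3) (Sym2.mem_mk_left 3 13)
  have w_2_20 : WithinDist2 Gr E2 E20 := wd2B Gr 2 3 10 13 3 13 rfl rfl rfl (by decide) (by decide) (by decide) 3 (Sym2.mem_mk_right 2 3) (Sym2.mem_mk_left 3 13) 13 (Sym2.mem_mk_right 3 13) (Sym2.mem_mk_right 10 13)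
  have w_3_1 : WithinDist2 Gr E3 E1 := wd2B Gr 3 4 1 2 2 3 rfl rfl rfl (by decide) (by decide) (by decide) 3 (Sym2.mem_mk_left 3 4) (Sym2.mem_mk_right 2 3) 2 (Sym2.mem_mk_left 2 3) (Sym2.mem_mk_right 1 2)
  have w_3_2 : WithinDist2 Gr E3 E2 := wd2A Gr 3 4 2 3 rfl rfl (by decide) 3 (Sym2.mem_mk_left 3 4) (Sym2.mem_mk_right 2 3)
  have w_3_4 : WithinDist2 Gr E3 E4 := wd2A Gr 3 4 4 5 rfl rfl (by decide) 4 (Sym2.mem_mk_right 3 4) (Sym2.mem_mk_left 4 5)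
  have w_3_12 : WithinDist2 Gr E3 E12 := wd2B Gr 3 4 2 12 2 3 rfl rfl rfl (by decide) (by decide) (by decide) 3 (Sym2.mem_mk_left 3 4) (Sym2.mem_mk_right 2 3) 2 (Sym2.mem_mk_left 2 3) (Sym2.mem_mk_left 2 12)
  have w_3_13 : WithinDist2 Gr E3 E13 := wd2A Gr 3 4 3 13 rfl rfl (by decide) 3 (Sym2.mem_mk_left 3 4) (Sym2.mem_mk_left 3 13)
  have w_3_20 : WithinDist2 Gr E3 E20 := wd2B Gr 3 4 10 13 3 13 rfl rfl rfl (by decide) (by decide) (by decide) 3 (Sym2.mem_mk_left 3 4) (Sym2.mem_mk_left 3 13) 13 (Sym2.mem_mk_right 3 13) (Sym2.mem_mk_right 10 13)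
  have w_3_24 : WithinDist2 Gr E3 E24 := wd2B Gr 3 4 14 17 4 14 rfl rfl rfl (by decide) (by decide) (by decide) 4 (Sym2.mem_mk_right 3 4) (Sym2.mem_mk_left 4 14) 14 (Sym2.mem_mk_right 4 14) (Sym2.mem_mk_left 14 17)
  have w_4_2 : WithinDist2 Gr E4 E2 := wd2B Gr 4 5 2 3 3 4 rfl rfl rfl (by decide) (by decide) (by decide) 4 (Sym2.mem_mk_left 4 5) (Sym2.mem_mk_right 3 4) 3 (Sym2.mem_mk_left 3 4) (Sym2.mem_mk_right 2 3)
  have w_4_5 : WithinDist2 Gr E4 E5 := wd2A Gr 4 5 5 6 rfl rfl (by decide) 5 (Sym2.mem_mk_right 4 5) (Sym2.mem_mk_left 5 6)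
  have w_4_6 : WithinDist2 Gr E4 E6 := wd2B Gr 4 5 6 7 5 6 rfl rfl rfl (by decide) (by decide) (by decide) 5 (Sym2.mem_mk_right 4 5) (Sym2.mem_mk_left 5 6) 6 (Sym2.mem_mk_right 5 6) (Sym2.mem_mk_left 6 7)
  have w_4_13 : WithinDist2 Gr E4 E13 := wd2B Gr 4 5 3 13 3 4 rfl rfl rfl (by decide) (by decide) (by decide) 4 (Sym2.mem_mk_left 4 5) (Sym2.mem_mk_right 3 4) 3 (Sym2.mem_mk_left 3 4) (Sym2.mem_mk_left 3 13)
  have w_4_15 : WithinDist2 Gr E4 E15 := wd2A Gr 4 5 5 15 rfl rfl (by decide) 5 (Sym2.mem_mk_right 4 5) (Sym2.mem_mk_left 5 15)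
  have w_4_16 : WithinDist2 Gr E4 E16 := wd2B Gr 4 5 6 16 5 6 rfl rfl rfl (by decide) (by decide) (by decide) 5 (Sym2.mem_mk_right 4 5) (Sym2.mem_mk_left 5 6) 6 (Sym2.mem_mk_right 5 6) (Sym2.mem_mk_left 6 16)
  have w_4_21 : WithinDist2 Gr E4 E21 := wd2B Gr 4 5 11 14 4 14 rfl rfl rfl (by decide) (by decide) (by decide) 4 (Sym2.mem_mk_left 4 5) (Sym2.mem_mk_left 4 14) 14 (Sym2.mem_mk_right 4 14) (Sym2.mem_mk_right 11 14)
  have w_4_22 : WithinDist2 Gr E4 E22 := wd2B Gr 4 5 12 15 5 15 rfl rfl rfl (by decide) (by decide) (by decide) 5 (Sym2.mem_mk_right 4 5) (Sym2.mem_mk_left 5 15) 15 (Sym2.mem_mk_right 5 15) (Sym2.mem_mk_right 12 15)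
  have w_5_3 : WithinDist2 Gr E5 E3 := wd2B Gr 5 6 3 4 4 5 rfl rfl rfl (by decide) (by decide) (by decide) 5 (Sym2.mem_mk_left 5 6) (Sym2.mem_mk_right 4 5) 4 (Sym2.mem_mk_left 4 5) (Sym2.mem_mk_right 3 4)
  have w_5_6 : WithinDist2 Gr E5 E6 := wd2A Gr 5 6 6 7 rfl rfl (by decide) 6 (Sym2.mem_mk_right 5 6) (Sym2.mem_mk_left 6 7)
  have w_5_7 : WithinDist2 Gr E5 E7 := wd2B Gr 5 6 7 8 6 7 rfl rfl rfl (by decide) (by decide) (by decide) 6 (Sym2.mem_mk_right 5 6) (Sym2.mem_mk_left 6 7) 7 (Sym2.mem_mk_right 6 7) (Sym2.mem_mk_left 7 8)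
  have w_5_14 : WithinDist2 Gr E5 E14 := wd2B Gr 5 6 4 14 4 5 rfl rfl rfl (by decide) (by decide) (by decide) 5 (Sym2.mem_mk_left 5 6) (Sym2.mem_mk_right 4 5) 4 (Sym2.mem_mk_left 4 5) (Sym2.mem_mk_left 4 14)
  have w_5_15 : WithinDist2 Gr E5 E15 := wd2A Gr 5 6 5 15 rfl rfl (by decide) 5 (Sym2.mem_mk_left 5 6) (Sym2.mem_mk_left 5 15)
  have w_5_16 : WithinDist2 Gr E5 E16 := wd2A Gr 5 6 6 16 rfl rfl (by decide) 6 (Sym2.mem_mk_right 5 6) (Sym2.mem_mk_left 6 16)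
  have w_5_22 : WithinDist2 Gr E5 E22 := wd2B Gr 5 6 12 15 5 15 rfl rfl rfl (by decide) (by decide) (by decide) 5 (Sym2.mem_mk_left 5 6) (Sym2.mem_mk_left 5 15) 15 (Sym2.mem_mk_right 5 15) (Sym2.mem_mk_right 12 15)
  have w_5_23 : WithinDist2 Gr E5 E23 := wd2B Gr 5 6 13 16 6 16 rfl rfl rfl (by decide) (by decide) (by decide) 6 (Sym2.mem_mk_right 5 6) (Sym2.mem_mk_left 6 16) 16 (Sym2.mem_mk_right 6 16) (Sym2.mem_mk_right 13 16)
  have w_6_4 : WithinDist2 Gr E6 E4 := wd2B Gr 6 7 4 5 5 6 rfl rfl rfl (by decide) (by decide) (by decide) 6 (Sym2.mem_mk_left 6 7) (Sym2.mem_mk_right 5 6) 5 (Sym2.mem_mk_left 5 6) (Sym2.mem_mk_right 4 5)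
  have w_6_5 : WithinDist2 Gr E6 E5 := wd2A Gr 6 7 5 6 rfl rfl (by decide) 6 (Sym2.mem_mk_left 6 7) (Sym2.mem_mk_right 5 6)
  have w_6_15 : WithinDist2 Gr E6 E15 := wd2B Gr 6 7 5 15 5 6 rfl rfl rfl (by decide) (by decide) (by decide) 6 (Sym2.mem_mk_left 6 7) (Sym2.mem_mk_right 5 6) 5 (Sym2.mem_mk_left 5 6) (Sym2.mem_mk_left 5 15)
  have w_6_16 : WithinDist2 Gr E6 E16 := wd2A Gr 6 7 6 16 rfl rfl (by decide) 6 (Sym2.mem_mk_left 6 7) (Sym2.mem_mk_left 6 16)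
  have w_6_23 : WithinDist2 Gr E6 E23 := wd2B Gr 6 7 13 16 6 16 rfl rfl rfl (by decide) (by decide) (by decide) 6 (Sym2.mem_mk_left 6 7) (Sym2.mem_mk_left 6 16) 16 (Sym2.mem_mk_right 6 16) (Sym2.mem_mk_right 13 16)
  have w_6_24 : WithinDist2 Gr E6 E24 := wd2B Gr 6 7 14 17 7 17 rfl rfl rfl (by decide) (by decide) (by decide) 7 (Sym2.mem_mk_right 6 7) (Sym2.mem_mk_left 7 17) 17 (Sym2.mem_mk_right 7 17) (Sym2.mem_mk_right 14 17)
  have w_6_27 : WithinDist2 Gr E6 E27 := wd2B Gr 6 7 10 17 7 17 rfl rfl rfl (by decide) (by decide) (by decide) 7 (Sym2.mem_mk_right 6 7) (Sym2.mem_mk_left 7 17) 17 (Sym2.mem_mk_right 7 17) (Sym2.mem_mk_right 10 17)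
  have w_7_6 : WithinDist2 Gr E7 E6 := wd2A Gr 7 8 6 7 rfl rfl (by decide) 7 (Sym2.mem_mk_left 7 8) (Sym2.mem_mk_right 6 7)
  have w_7_9 : WithinDist2 Gr E7 E9 := wd2B Gr 7 8 0 9 8 9 rfl rfl rfl (by decide) (by decide) (by decide) 8 (Sym2.mem_mk_right 7 8) (Sym2.mem_mk_left 8 9) 9 (Sym2.mem_mk_right 8 9) (Sym2.mem_mk_right 0 9)
  have w_7_24 : WithinDist2 Gr E7 E24 := wd2B Gr 7 8 14 17 7 17 rfl rfl rfl (by decide) (by decide) (by decide) 7 (Sym2.mem_mk_left 7 8) (Sym2.mem_mk_left 7 17) 17 (Sym2.mem_mk_right 7 17) (Sym2.mem_mk_right 14 17)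
  have w_7_27 : WithinDist2 Gr E7 E27 := wd2B Gr 7 8 10 17 7 17 rfl rfl rfl (by decide) (by decide) (by decide) 7 (Sym2.mem_mk_left 7 8) (Sym2.mem_mk_left 7 17) 17 (Sym2.mem_mk_right 7 17) (Sym2.mem_mk_right 10 17)
  have w_8_0 : WithinDist2 Gr E8 E0 := wd2B Gr 8 9 0 1 0 9 rfl rfl rfl (by decide) (by decide) (by decide) 9 (Sym2.mem_mk_right 8 9) (Sym2.mem_mk_right 0 9) 0 (Sym2.mem_mk_left 0 9) (Sym2.mem_mk_left 0 1)
  have w_8_6 : WithinDist2 Gr E8 E6 := wd2B Gr 8 9 6 7 7 8 rfl rfl rfl (by decide) (by decide) (by decide) 8 (Sym2.mem_mk_left 8 9) (Sym2.mem_mk_right 7 8) 7 (Sym2.mem_mk_left 7 8) (Sym2.mem_mk_right 6 7)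
  have w_8_9 : WithinDist2 Gr E8 E9 := wd2A Gr 8 9 0 9 rfl rfl (by decide) 9 (Sym2.mem_mk_right 8 9) (Sym2.mem_mk_right 0 9)
  have w_8_10 : WithinDist2 Gr E8 E10 := wd2B Gr 8 9 0 10 0 9 rfl rfl rfl (by decide) (by decide) (by decide) 9 (Sym2.mem_mk_right 8 9) (Sym2.mem_mk_right 0 9) 0 (Sym2.mem_mk_left 0 9) (Sym2.mem_mk_left 0 10)
  have w_9_10 : WithinDist2 Gr E9 E10 := wd2A Gr 0 9 0 10 rfl rfl (by decide) 0 (Sym2.mem_mk_left 0 9) (Sym2.mem_mk_left 0 10)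
  have w_9_11 : WithinDist2 Gr E9 E11 := wd2B Gr 0 9 1 11 0 1 rfl rfl rfl (by decide) (by decide) (by decide) 0 (Sym2.mem_mk_left 0 9) (Sym2.mem_mk_left 0 1) 1 (Sym2.mem_mk_right 0 1) (Sym2.mem_mk_left 1 11)
  have w_10_11 : WithinDist2 Gr E10 E11 := wd2B Gr 0 10 1 11 0 1 rfl rfl rfl (by decide) (by decide) (by decide) 0 (Sym2.mem_mk_left 0 10) (Sym2.mem_mk_left 0 1) 1 (Sym2.mem_mk_right 0 1) (Sym2.mem_mk_left 1 11)
  have w_12_0 : WithinDist2 Gr E12 E0 := wd2B Gr 2 12 0 1 1 2 rfl rfl rfl (by decide) (by decide) (by decide) 2 (Sym2.mem_mk_left 2 12) (Sym2.mem_mk_right 1 2) 1 (Sym2.mem_mk_left 1 2) (Sym2.mem_mk_right 0 1)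
  have w_12_1 : WithinDist2 Gr E12 E1 := wd2A Gr 2 12 1 2 rfl rfl (by decide) 2 (Sym2.mem_mk_left 2 12) (Sym2.mem_mk_right 1 2)
  have w_12_2 : WithinDist2 Gr E12 E2 := wd2A Gr 2 12 2 3 rfl rfl (by decide) 2 (Sym2.mem_mk_left 2 12) (Sym2.mem_mk_left 2 3)
  have w_12_11 : WithinDist2 Gr E12 E11 := wd2B Gr 2 12 1 11 1 2 rfl rfl rfl (by decide) (by decide) (by decide) 2 (Sym2.mem_mk_left 2 12) (Sym2.mem_mk_right 1 2) 1 (Sym2.mem_mk_left 1 2) (Sym2.mem_mk_left 1 11)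
  have w_13_1 : WithinDist2 Gr E13 E1 := wd2B Gr 3 13 1 2 2 3 rfl rfl rfl (by decide) (by decide) (by decide) 3 (Sym2.mem_mk_left 3 13) (Sym2.mem_mk_right 2 3) 2 (Sym2.mem_mk_left 2 3) (Sym2.mem_mk_right 1 2)
  have w_13_2 : WithinDist2 Gr E13 E2 := wd2A Gr 3 13 2 3 rfl rfl (by decide) 3 (Sym2.mem_mk_left 3 13) (Sym2.mem_mk_right 2 3)
  have w_13_3 : WithinDist2 Gr E13 E3 := wd2A Gr 3 13 3 4 rfl rfl (by decide) 3 (Sym2.mem_mk_left 3 13) (Sym2.mem_mk_left 3 4)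
  have w_13_10 : WithinDist2 Gr E13 E10 := wd2B Gr 3 13 0 10 10 13 rfl rfl rfl (by decide) (by decide) (by decide) 13 (Sym2.mem_mk_right 3 13) (Sym2.mem_mk_right 10 13) 10 (Sym2.mem_mk_left 10 13) (Sym2.mem_mk_right 0 10)
  have w_13_12 : WithinDist2 Gr E13 E12 := wd2B Gr 3 13 2 12 2 3 rfl rfl rfl (by decide) (by decide) (by decide) 3 (Sym2.mem_mk_left 3 13) (Sym2.mem_mk_right 2 3) 2 (Sym2.mem_mk_left 2 3) (Sym2.mem_mk_left 2 12)
  have w_13_20 : WithinDist2 Gr E13 E20 := wd2A Gr 3 13 10 13 rfl rfl (by decide) 13 (Sym2.mem_mk_right 3 13) (Sym2.mem_mk_right 10 13)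
  have w_13_23 : WithinDist2 Gr E13 E23 := wd2A Gr 3 13 13 16 rfl rfl (by decide) 13 (Sym2.mem_mk_right 3 13) (Sym2.mem_mk_left 13 16)
  have w_13_26 : WithinDist2 Gr E13 E26 := wd2B Gr 3 13 16 19 13 16 rfl rfl rfl (by decide) (by decide) (by decide) 13 (Sym2.mem_mk_right 3 13) (Sym2.mem_mk_left 13 16) 16 (Sym2.mem_mk_right 13 16) (Sym2.mem_mk_left 16 19)
  have w_14_2 : WithinDist2 Gr E14 E2 := wd2B Gr 4 14 2 3 3 4 rfl rfl rfl (by decide) (by decide) (by decide) 4 (Sym2.mem_mk_left 4 14) (Sym2.mem_mk_right 3 4) 3 (Sym2.mem_mk_left 3 4) (Sym2.mem_mk_right 2 3)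
  have w_14_3 : WithinDist2 Gr E14 E3 := wd2A Gr 4 14 3 4 rfl rfl (by decide) 4 (Sym2.mem_mk_left 4 14) (Sym2.mem_mk_right 3 4)
  have w_14_4 : WithinDist2 Gr E14 E4 := wd2A Gr 4 14 4 5 rfl rfl (by decide) 4 (Sym2.mem_mk_left 4 14) (Sym2.mem_mk_left 4 5)
  have w_14_11 : WithinDist2 Gr E14 E11 := wd2B Gr 4 14 1 11 11 14 rfl rfl rfl (by decide) (by decide) (by decide) 14 (Sym2.mem_mk_right 4 14) (Sym2.mem_mk_right 11 14) 11 (Sym2.mem_mk_left 11 14) (Sym2.mem_mk_right 1 11)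
  have w_14_13 : WithinDist2 Gr E14 E13 := wd2B Gr 4 14 3 13 3 4 rfl rfl rfl (by decide) (by decide) (by decide) 4 (Sym2.mem_mk_left 4 14) (Sym2.mem_mk_right 3 4) 3 (Sym2.mem_mk_left 3 4) (Sym2.mem_mk_left 3 13)
  have w_14_21 : WithinDist2 Gr E14 E21 := wd2A Gr 4 14 11 14 rfl rfl (by decide) 14 (Sym2.mem_mk_right 4 14) (Sym2.mem_mk_right 11 14)
  have w_15_3 : WithinDist2 Gr E15 E3 := wd2B Gr 5 15 3 4 4 5 rfl rfl rfl (by decide) (by decide) (by decide) 5 (Sym2.mem_mk_left 5 15) (Sym2.mem_mk_right 4 5) 4 (Sym2.mem_mk_left 4 5) (Sym2.mem_mk_right 3 4)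
  have w_15_5 : WithinDist2 Gr E15 E5 := wd2A Gr 5 15 5 6 rfl rfl (by decide) 5 (Sym2.mem_mk_left 5 15) (Sym2.mem_mk_left 5 6)
  have w_15_12 : WithinDist2 Gr E15 E12 := wd2B Gr 5 15 2 12 12 15 rfl rfl rfl (by decide) (by decide) (by decide) 15 (Sym2.mem_mk_right 5 15) (Sym2.mem_mk_right 12 15) 12 (Sym2.mem_mk_left 12 15) (Sym2.mem_mk_right 2 12)
  have w_15_14 : WithinDist2 Gr E15 E14 := wd2B Gr 5 15 4 14 4 5 rfl rfl rfl (by decide) (by decide) (by decide) 5 (Sym2.mem_mk_left 5 15) (Sym2.mem_mk_right 4 5) 4 (Sym2.mem_mk_left 4 5) (Sym2.mem_mk_left 4 14)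
  have w_15_16 : WithinDist2 Gr E15 E16 := wd2B Gr 5 15 6 16 5 6 rfl rfl rfl (by decide) (by decide) (by decide) 5 (Sym2.mem_mk_left 5 15) (Sym2.mem_mk_left 5 6) 6 (Sym2.mem_mk_right 5 6) (Sym2.mem_mk_left 6 16)
  have w_15_22 : WithinDist2 Gr E15 E22 := wd2A Gr 5 15 12 15 rfl rfl (by decide) 15 (Sym2.mem_mk_right 5 15) (Sym2.mem_mk_right 12 15)
  have w_16_7 : WithinDist2 Gr E16 E7 := wd2B Gr 6 16 7 8 6 7 rfl rfl rfl (by decide) (by decide) (by decide) 6 (Sym2.mem_mk_left 6 16) (Sym2.mem_mk_left 6 7) 7 (Sym2.mem_mk_right 6 7) (Sym2.mem_mk_left 7 8)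
  have w_16_13 : WithinDist2 Gr E16 E13 := wd2B Gr 6 16 3 13 13 16 rfl rfl rfl (by decide) (by decide) (by decide) 16 (Sym2.mem_mk_right 6 16) (Sym2.mem_mk_right 13 16) 13 (Sym2.mem_mk_left 13 16) (Sym2.mem_mk_right 3 13)
  have w_16_20 : WithinDist2 Gr E16 E20 := wd2B Gr 6 16 10 13 13 16 rfl rfl rfl (by decide) (by decide) (by decide) 16 (Sym2.mem_mk_right 6 16) (Sym2.mem_mk_right 13 16) 13 (Sym2.mem_mk_left 13 16) (Sym2.mem_mk_right 10 13)
  have w_16_23 : WithinDist2 Gr E16 E23 := wd2A Gr 6 16 13 16 rfl rfl (by decide) 16 (Sym2.mem_mk_right 6 16) (Sym2.mem_mk_right 13 16)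
  have w_16_26 : WithinDist2 Gr E16 E26 := wd2A Gr 6 16 16 19 rfl rfl (by decide) 16 (Sym2.mem_mk_right 6 16) (Sym2.mem_mk_left 16 19)
  have w_17_10 : WithinDist2 Gr E17 E10 := wd2B Gr 7 17 0 10 10 17 rfl rfl rfl (by decide) (by decide) (by decide) 17 (Sym2.mem_mk_right 7 17) (Sym2.mem_mk_right 10 17) 10 (Sym2.mem_mk_left 10 17) (Sym2.mem_mk_right 0 10)
  have w_17_14 : WithinDist2 Gr E17 E14 := wd2B Gr 7 17 4 14 14 17 rfl rfl rfl (by decide) (by decide) (by decide) 17 (Sym2.mem_mk_right 7 17) (Sym2.mem_mk_right 14 17) 14 (Sym2.mem_mk_left 14 17) (Sym2.mem_mk_right 4 14)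
  have w_17_16 : WithinDist2 Gr E17 E16 := wd2B Gr 7 17 6 16 6 7 rfl rfl rfl (by decide) (by decide) (by decide) 7 (Sym2.mem_mk_left 7 17) (Sym2.mem_mk_right 6 7) 6 (Sym2.mem_mk_left 6 7) (Sym2.mem_mk_left 6 16)
  have w_17_24 : WithinDist2 Gr E17 E24 := wd2A Gr 7 17 14 17 rfl rfl (by decide) 17 (Sym2.mem_mk_right 7 17) (Sym2.mem_mk_right 14 17)
  have w_17_27 : WithinDist2 Gr E17 E27 := wd2A Gr 7 17 10 17 rfl rfl (by decide) 17 (Sym2.mem_mk_right 7 17) (Sym2.mem_mk_right 10 17)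
  have w_18_6 : WithinDist2 Gr E18 E6 := wd2B Gr 8 18 6 7 7 8 rfl rfl rfl (by decide) (by decide) (by decide) 8 (Sym2.mem_mk_left 8 18) (Sym2.mem_mk_right 7 8) 7 (Sym2.mem_mk_left 7 8) (Sym2.mem_mk_right 6 7)
  have w_18_9 : WithinDist2 Gr E18 E9 := wd2B Gr 8 18 0 9 8 9 rfl rfl rfl (by decide) (by decide) (by decide) 8 (Sym2.mem_mk_left 8 18) (Sym2.mem_mk_left 8 9) 9 (Sym2.mem_mk_right 8 9) (Sym2.mem_mk_right 0 9)
  have w_18_11 : WithinDist2 Gr E18 E11 := wd2B Gr 8 18 1 11 11 18 rfl rfl rfl (by decide) (by decide) (by decide) 18 (Sym2.mem_mk_right 8 18) (Sym2.mem_mk_right 11 18) 11 (Sym2.mem_mk_left 11 18) (Sym2.mem_mk_right 1 11)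
  have w_18_21 : WithinDist2 Gr E18 E21 := wd2B Gr 8 18 11 14 11 18 rfl rfl rfl (by decide) (by decide) (by decide) 18 (Sym2.mem_mk_right 8 18) (Sym2.mem_mk_right 11 18) 11 (Sym2.mem_mk_left 11 18) (Sym2.mem_mk_left 11 14)
  have w_19_0 : WithinDist2 Gr E19 E0 := wd2B Gr 9 19 0 1 0 9 rfl rfl rfl (by decide) (by decide) (by decide) 9 (Sym2.mem_mk_left 9 19) (Sym2.mem_mk_right 0 9) 0 (Sym2.mem_mk_left 0 9) (Sym2.mem_mk_left 0 1)
  have w_19_8 : WithinDist2 Gr E19 E8 := wd2A Gr 9 19 8 9 rfl rfl (by decide) 9 (Sym2.mem_mk_left 9 19) (Sym2.mem_mk_right 8 9)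
  have w_19_9 : WithinDist2 Gr E19 E9 := wd2A Gr 9 19 0 9 rfl rfl (by decide) 9 (Sym2.mem_mk_left 9 19) (Sym2.mem_mk_right 0 9)
  have w_19_10 : WithinDist2 Gr E19 E10 := wd2B Gr 9 19 0 10 0 9 rfl rfl rfl (by decide) (by decide) (by decide) 9 (Sym2.mem_mk_left 9 19) (Sym2.mem_mk_right 0 9) 0 (Sym2.mem_mk_left 0 9) (Sym2.mem_mk_left 0 10)
  have w_20_0 : WithinDist2 Gr E20 E0 := wd2B Gr 10 13 0 1 0 10 rfl rfl rfl (by decide) (by decide) (by decide) 10 (Sym2.mem_mk_left 10 13) (Sym2.mem_mk_right 0 10) 0 (Sym2.mem_mk_left 0 10) (Sym2.mem_mk_left 0 1)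
  have w_20_3 : WithinDist2 Gr E20 E3 := wd2B Gr 10 13 3 4 3 13 rfl rfl rfl (by decide) (by decide) (by decide) 13 (Sym2.mem_mk_right 10 13) (Sym2.mem_mk_right 3 13) 3 (Sym2.mem_mk_left 3 13) (Sym2.mem_mk_left 3 4)
  have w_20_9 : WithinDist2 Gr E20 E9 := wd2B Gr 10 13 0 9 0 10 rfl rfl rfl (by decide) (by decide) (by decide) 10 (Sym2.mem_mk_left 10 13) (Sym2.mem_mk_right 0 10) 0 (Sym2.mem_mk_left 0 10) (Sym2.mem_mk_left 0 9)
  have w_20_10 : WithinDist2 Gr E20 E10 := wd2A Gr 10 13 0 10 rfl rfl (by decide) 10 (Sym2.mem_mk_left 10 13) (Sym2.mem_mk_right 0 10)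
  have w_20_23 : WithinDist2 Gr E20 E23 := wd2A Gr 10 13 13 16 rfl rfl (by decide) 13 (Sym2.mem_mk_right 10 13) (Sym2.mem_mk_left 13 16)
  have w_20_26 : WithinDist2 Gr E20 E26 := wd2B Gr 10 13 16 19 13 16 rfl rfl rfl (by decide) (by decide) (by decide) 13 (Sym2.mem_mk_right 10 13) (Sym2.mem_mk_left 13 16) 16 (Sym2.mem_mk_right 13 16) (Sym2.mem_mk_left 16 19)
  have w_21_0 : WithinDist2 Gr E21 E0 := wd2B Gr 11 14 0 1 1 11 rfl rfl rfl (by decide) (by decide) (by decide) 11 (Sym2.mem_mk_left 11 14) (Sym2.mem_mk_right 1 11) 1 (Sym2.mem_mk_left 1 11) (Sym2.mem_mk_right 0 1)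
  have w_21_1 : WithinDist2 Gr E21 E1 := wd2B Gr 11 14 1 2 1 11 rfl rfl rfl (by decide) (by decide) (by decide) 11 (Sym2.mem_mk_left 11 14) (Sym2.mem_mk_right 1 11) 1 (Sym2.mem_mk_left 1 11) (Sym2.mem_mk_left 1 2)
  have w_21_4 : WithinDist2 Gr E21 E4 := wd2B Gr 11 14 4 5 4 14 rfl rfl rfl (by decide) (by decide) (by decide) 14 (Sym2.mem_mk_right 11 14) (Sym2.mem_mk_right 4 14) 4 (Sym2.mem_mk_left 4 14) (Sym2.mem_mk_left 4 5)
  have w_21_11 : WithinDist2 Gr E21 E11 := wd2A Gr 11 14 1 11 rfl rfl (by decide) 11 (Sym2.mem_mk_left 11 14) (Sym2.mem_mk_right 1 11)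
  have w_21_25 : WithinDist2 Gr E21 E25 := wd2B Gr 11 14 15 18 11 18 rfl rfl rfl (by decide) (by decide) (by decide) 11 (Sym2.mem_mk_left 11 14) (Sym2.mem_mk_left 11 18) 18 (Sym2.mem_mk_right 11 18) (Sym2.mem_mk_right 15 18)
  have w_22_1 : WithinDist2 Gr E22 E1 := wd2B Gr 12 15 1 2 2 12 rfl rfl rfl (by decide) (by decide) (by decide) 12 (Sym2.mem_mk_left 12 15) (Sym2.mem_mk_right 2 12) 2 (Sym2.mem_mk_left 2 12) (Sym2.mem_mk_right 1 2)
  have w_22_2 : WithinDist2 Gr E22 E2 := wd2B Gr 12 15 2 3 2 12 rfl rfl rfl (by decide) (by decide) (by decide) 12 (Sym2.mem_mk_left 12 15) (Sym2.mem_mk_right 2 12) 2 (Sym2.mem_mk_left 2 12) (Sym2.mem_mk_left 2 3)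
  have w_22_5 : WithinDist2 Gr E22 E5 := wd2B Gr 12 15 5 6 5 15 rfl rfl rfl (by decide) (by decide) (by decide) 15 (Sym2.mem_mk_right 12 15) (Sym2.mem_mk_right 5 15) 5 (Sym2.mem_mk_left 5 15) (Sym2.mem_mk_left 5 6)
  have w_22_12 : WithinDist2 Gr E22 E12 := wd2A Gr 12 15 2 12 rfl rfl (by decide) 12 (Sym2.mem_mk_left 12 15) (Sym2.mem_mk_right 2 12)
  have w_23_2 : WithinDist2 Gr E23 E2 := wd2B Gr 13 16 2 3 3 13 rfl rfl rfl (by decide) (by decide) (by decide) 13 (Sym2.mem_mk_left 13 16) (Sym2.mem_mk_right 3 13) 3 (Sym2.mem_mk_left 3 13) (Sym2.mem_mk_right 2 3)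
  have w_23_3 : WithinDist2 Gr E23 E3 := wd2B Gr 13 16 3 4 3 13 rfl rfl rfl (by decide) (by decide) (by decide) 13 (Sym2.mem_mk_left 13 16) (Sym2.mem_mk_right 3 13) 3 (Sym2.mem_mk_left 3 13) (Sym2.mem_mk_left 3 4)
  have w_23_10 : WithinDist2 Gr E23 E10 := wd2B Gr 13 16 0 10 10 13 rfl rfl rfl (by decide) (by decide) (by decide) 13 (Sym2.mem_mk_left 13 16) (Sym2.mem_mk_right 10 13) 10 (Sym2.mem_mk_left 10 13) (Sym2.mem_mk_right 0 10)
  have w_23_13 : WithinDist2 Gr E23 E13 := wd2A Gr 13 16 3 13 rfl rfl (by decide) 13 (Sym2.mem_mk_left 13 16) (Sym2.mem_mk_right 3 13)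
  have w_23_20 : WithinDist2 Gr E23 E20 := wd2A Gr 13 16 10 13 rfl rfl (by decide) 13 (Sym2.mem_mk_left 13 16) (Sym2.mem_mk_right 10 13)
  have w_23_26 : WithinDist2 Gr E23 E26 := wd2A Gr 13 16 16 19 rfl rfl (by decide) 16 (Sym2.mem_mk_right 13 16) (Sym2.mem_mk_left 16 19)
  have w_24_4 : WithinDist2 Gr E24 E4 := wd2B Gr 14 17 4 5 4 14 rfl rfl rfl (by decide) (by decide) (by decide) 14 (Sym2.mem_mk_left 14 17) (Sym2.mem_mk_right 4 14) 4 (Sym2.mem_mk_left 4 14) (Sym2.mem_mk_left 4 5)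
  have w_24_10 : WithinDist2 Gr E24 E10 := wd2B Gr 14 17 0 10 10 17 rfl rfl rfl (by decide) (by decide) (by decide) 17 (Sym2.mem_mk_right 14 17) (Sym2.mem_mk_right 10 17) 10 (Sym2.mem_mk_left 10 17) (Sym2.mem_mk_right 0 10)
  have w_24_11 : WithinDist2 Gr E24 E11 := wd2B Gr 14 17 1 11 11 14 rfl rfl rfl (by decide) (by decide) (by decide) 14 (Sym2.mem_mk_left 14 17) (Sym2.mem_mk_right 11 14) 11 (Sym2.mem_mk_left 11 14) (Sym2.mem_mk_right 1 11)
  have w_24_14 : WithinDist2 Gr E24 E14 := wd2A Gr 14 17 4 14 rfl rfl (by decide) 14 (Sym2.mem_mk_left 14 17) (Sym2.mem_mk_right 4 14)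
  have w_25_4 : WithinDist2 Gr E25 E4 := wd2B Gr 15 18 4 5 5 15 rfl rfl rfl (by decide) (by decide) (by decide) 15 (Sym2.mem_mk_left 15 18) (Sym2.mem_mk_right 5 15) 5 (Sym2.mem_mk_left 5 15) (Sym2.mem_mk_right 4 5)
  have w_25_5 : WithinDist2 Gr E25 E5 := wd2B Gr 15 18 5 6 5 15 rfl rfl rfl (by decide) (by decide) (by decide) 15 (Sym2.mem_mk_left 15 18) (Sym2.mem_mk_right 5 15) 5 (Sym2.mem_mk_left 5 15) (Sym2.mem_mk_left 5 6)
  have w_25_11 : WithinDist2 Gr E25 E11 := wd2B Gr 15 18 1 11 11 18 rfl rfl rfl (by decide) (by decide) (by decide) 18 (Sym2.mem_mk_right 15 18) (Sym2.mem_mk_right 11 18) 11 (Sym2.mem_mk_left 11 18) (Sym2.mem_mk_right 1 11)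
  have w_25_12 : WithinDist2 Gr E25 E12 := wd2B Gr 15 18 2 12 12 15 rfl rfl rfl (by decide) (by decide) (by decide) 15 (Sym2.mem_mk_left 15 18) (Sym2.mem_mk_right 12 15) 12 (Sym2.mem_mk_left 12 15) (Sym2.mem_mk_right 2 12)
  have w_25_15 : WithinDist2 Gr E25 E15 := wd2A Gr 15 18 5 15 rfl rfl (by decide) 15 (Sym2.mem_mk_left 15 18) (Sym2.mem_mk_right 5 15)
  have w_25_21 : WithinDist2 Gr E25 E21 := wd2B Gr 15 18 11 14 11 18 rfl rfl rfl (by decide) (by decide) (by decide) 18 (Sym2.mem_mk_right 15 18) (Sym2.mem_mk_right 11 18) 11 (Sym2.mem_mk_left 11 18) (Sym2.mem_mk_left 11 14)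
  have w_25_22 : WithinDist2 Gr E25 E22 := wd2A Gr 15 18 12 15 rfl rfl (by decide) 15 (Sym2.mem_mk_left 15 18) (Sym2.mem_mk_right 12 15)
  have w_26_8 : WithinDist2 Gr E26 E8 := wd2B Gr 16 19 8 9 9 19 rfl rfl rfl (by decide) (by decide) (by decide) 19 (Sym2.mem_mk_right 16 19) (Sym2.mem_mk_right 9 19) 9 (Sym2.mem_mk_left 9 19) (Sym2.mem_mk_right 8 9)
  have w_26_9 : WithinDist2 Gr E26 E9 := wd2B Gr 16 19 0 9 9 19 rfl rfl rfl (by decide) (by decide) (by decide) 19 (Sym2.mem_mk_right 16 19) (Sym2.mem_mk_right 9 19) 9 (Sym2.mem_mk_left 9 19) (Sym2.mem_mk_right 0 9)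
  have w_26_12 : WithinDist2 Gr E26 E12 := wd2B Gr 16 19 2 12 12 19 rfl rfl rfl (by decide) (by decide) (by decide) 19 (Sym2.mem_mk_right 16 19) (Sym2.mem_mk_right 12 19) 12 (Sym2.mem_mk_left 12 19) (Sym2.mem_mk_right 2 12)
  have w_26_13 : WithinDist2 Gr E26 E13 := wd2B Gr 16 19 3 13 13 16 rfl rfl rfl (by decide) (by decide) (by decide) 16 (Sym2.mem_mk_left 16 19) (Sym2.mem_mk_right 13 16) 13 (Sym2.mem_mk_left 13 16) (Sym2.mem_mk_right 3 13)
  have w_26_20 : WithinDist2 Gr E26 E20 := wd2B Gr 16 19 10 13 13 16 rfl rfl rfl (by decide) (by decide) (by decide) 16 (Sym2.mem_mk_left 16 19) (Sym2.mem_mk_right 13 16) 13 (Sym2.mem_mk_left 13 16) (Sym2.mem_mk_right 10 13)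
  have w_27_0 : WithinDist2 Gr E27 E0 := wd2B Gr 10 17 0 1 0 10 rfl rfl rfl (by decide) (by decide) (by decide) 10 (Sym2.mem_mk_left 10 17) (Sym2.mem_mk_right 0 10) 0 (Sym2.mem_mk_left 0 10) (Sym2.mem_mk_left 0 1)
  have w_27_9 : WithinDist2 Gr E27 E9 := wd2B Gr 10 17 0 9 0 10 rfl rfl rfl (by decide) (by decide) (by decide) 10 (Sym2.mem_mk_left 10 17) (Sym2.mem_mk_right 0 10) 0 (Sym2.mem_mk_left 0 10) (Sym2.mem_mk_left 0 9)
  have w_27_10 : WithinDist2 Gr E27 E10 := wd2A Gr 10 17 0 10 rfl rfl (by decide) 10 (Sym2.mem_mk_left 10 17) (Sym2.mem_mk_right 0 10)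
  have w_27_14 : WithinDist2 Gr E27 E14 := wd2B Gr 10 17 4 14 14 17 rfl rfl rfl (by decide) (by decide) (by decide) 17 (Sym2.mem_mk_right 10 17) (Sym2.mem_mk_right 14 17) 14 (Sym2.mem_mk_left 14 17) (Sym2.mem_mk_right 4 14)
  have w_28_0 : WithinDist2 Gr E28 E0 := wd2B Gr 11 18 0 1 1 11 rfl rfl rfl (by decide) (by decide) (by decide) 11 (Sym2.mem_mk_left 11 18) (Sym2.mem_mk_right 1 11) 1 (Sym2.mem_mk_left 1 11) (Sym2.mem_mk_right 0 1)
  have w_28_1 : WithinDist2 Gr E28 E1 := wd2B Gr 11 18 1 2 1 11 rfl rfl rfl (by decide) (by decide) (by decide) 11 (Sym2.mem_mk_left 11 18) (Sym2.mem_mk_right 1 11) 1 (Sym2.mem_mk_left 1 11) (Sym2.mem_mk_left 1 2)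
  have w_28_11 : WithinDist2 Gr E28 E11 := wd2A Gr 11 18 1 11 rfl rfl (by decide) 11 (Sym2.mem_mk_left 11 18) (Sym2.mem_mk_right 1 11)
  have w_28_21 : WithinDist2 Gr E28 E21 := wd2A Gr 11 18 11 14 rfl rfl (by decide) 11 (Sym2.mem_mk_left 11 18) (Sym2.mem_mk_left 11 14)
  have w_28_25 : WithinDist2 Gr E28 E25 := wd2A Gr 11 18 15 18 rfl rfl (by decide) 18 (Sym2.mem_mk_right 11 18) (Sym2.mem_mk_right 15 18)
  have w_29_1 : WithinDist2 Gr E29 E1 := wd2B Gr 12 19 1 2 2 12 rfl rfl rfl (by decide) (by decide) (by decide) 12 (Sym2.mem_mk_left 12 19) (Sym2.mem_mk_right 2 12) 2 (Sym2.mem_mk_left 2 12) (Sym2.mem_mk_right 1 2)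
  have w_29_2 : WithinDist2 Gr E29 E2 := wd2B Gr 12 19 2 3 2 12 rfl rfl rfl (by decide) (by decide) (by decide) 12 (Sym2.mem_mk_left 12 19) (Sym2.mem_mk_right 2 12) 2 (Sym2.mem_mk_left 2 12) (Sym2.mem_mk_left 2 3)
  have w_29_8 : WithinDist2 Gr E29 E8 := wd2B Gr 12 19 8 9 9 19 rfl rfl rfl (by decide) (by decide) (by decide) 19 (Sym2.mem_mk_right 12 19) (Sym2.mem_mk_right 9 19) 9 (Sym2.mem_mk_left 9 19) (Sym2.mem_mk_right 8 9)
  have w_29_9 : WithinDist2 Gr E29 E9 := wd2B Gr 12 19 0 9 9 19 rfl rfl rfl (by decide) (by decide) (by decide) 19 (Sym2.mem_mk_right 12 19) (Sym2.mem_mk_right 9 19) 9 (Sym2.mem_mk_left 9 19) (Sym2.mem_mk_right 0 9)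
  have w_29_12 : WithinDist2 Gr E29 E12 := wd2A Gr 12 19 2 12 rfl rfl (by decide) 12 (Sym2.mem_mk_left 12 19) (Sym2.mem_mk_right 2 12)
  have d_0_1 : c E0 ≠ c E1 := hc E0 E1 w_0_1
  have d_0_2 : c E0 ≠ c E9 := hc E0 E9 w_0_9
  have d_0_3 : c E0 ≠ c E10 := hc E0 E10 w_0_10
  have d_0_4 : c E0 ≠ c E11 := hc E0 E11 w_0_11
  have d_1_2 : c E1 ≠ c E9 := hc E1 E9 w_1_9
  have d_1_3 : c E1 ≠ c E10 := hc E1 E10 w_1_10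
  have d_1_4 : c E1 ≠ c E11 := hc E1 E11 w_1_11
  have d_2_3 : c E9 ≠ c E10 := hc E9 E10 w_9_10
  have d_2_4 : c E9 ≠ c E11 := hc E9 E11 w_9_11
  have d_3_4 : c E10 ≠ c E11 := hc E10 E11 w_10_11
  have a_init0 : c E0 = c E0 := rfl
  have a_init1 : c E1 = c E1 := rfl
  have a_init2 : c E9 = c E9 := rfl
  have a_init3 : c E10 = c E10 := rfl
  have a_init4 : c E11 = c E11 := rfl
  have h1 : c E2 ≠ (c E0) := a_init0 ▸ hc E2 E0 w_2_0
  have h2 : c E8 ≠ (c E0) := a_init0 ▸ hc E8 E0 w_8_0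
  have h3 : c E12 ≠ (c E0) := a_init0 ▸ hc E12 E0 w_12_0
  have h4 : c E19 ≠ (c E0) := a_init0 ▸ hc E19 E0 w_19_0
  have h5 : c E20 ≠ (c E0) := a_init0 ▸ hc E20 E0 w_20_0
  have h6 : c E21 ≠ (c E0) := a_init0 ▸ hc E21 E0 w_21_0
  have h7 : c E27 ≠ (c E0) := a_init0 ▸ hc E27 E0 w_27_0
  have h8 : c E28 ≠ (c E0) := a_init0 ▸ hc E28 E0 w_28_0
  have h9 : c E2 ≠ (c E1) := a_init1 ▸ hc E2 E1 w_2_1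
  have h10 : c E3 ≠ (c E1) := a_init1 ▸ hc E3 E1 w_3_1
  have h11 : c E12 ≠ (c E1) := a_init1 ▸ hc E12 E1 w_12_1
  have h12 : c E13 ≠ (c E1) := a_init1 ▸ hc E13 E1 w_13_1
  have h13 : c E21 ≠ (c E1) := a_init1 ▸ hc E21 E1 w_21_1
  have h14 : c E22 ≠ (c E1) := a_init1 ▸ hc E22 E1 w_22_1
  have h15 : c E28 ≠ (c E1) := a_init1 ▸ hc E28 E1 w_28_1
  have h16 : c E29 ≠ (c E1) := a_init1 ▸ hc E29 E1 w_29_1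
  have h17 : c E7 ≠ (c E9) := a_init2 ▸ hc E7 E9 w_7_9
  have h18 : c E8 ≠ (c E9) := a_init2 ▸ hc E8 E9 w_8_9
  have h19 : c E18 ≠ (c E9) := a_init2 ▸ hc E18 E9 w_18_9
  have h20 : c E19 ≠ (c E9) := a_init2 ▸ hc E19 E9 w_19_9
  have h21 : c E20 ≠ (c E9) := a_init2 ▸ hc E20 E9 w_20_9
  have h22 : c E26 ≠ (c E9) := a_init2 ▸ hc E26 E9 w_26_9
  have h23 : c E27 ≠ (c E9) := a_init2 ▸ hc E27 E9 w_27_9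
  have h24 : c E29 ≠ (c E9) := a_init2 ▸ hc E29 E9 w_29_9
  have h25 : c E8 ≠ (c E10) := a_init3 ▸ hc E8 E10 w_8_10
  have h26 : c E13 ≠ (c E10) := a_init3 ▸ hc E13 E10 w_13_10
  have h27 : c E17 ≠ (c E10) := a_init3 ▸ hc E17 E10 w_17_10
  have h28 : c E19 ≠ (c E10) := a_init3 ▸ hc E19 E10 w_19_10
  have h29 : c E20 ≠ (c E10) := a_init3 ▸ hc E20 E10 w_20_10
  have h30 : c E23 ≠ (c E10) := a_init3 ▸ hc E23 E10 w_23_10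
  have h31 : c E24 ≠ (c E10) := a_init3 ▸ hc E24 E10 w_24_10
  have h32 : c E27 ≠ (c E10) := a_init3 ▸ hc E27 E10 w_27_10
  have h33 : c E2 ≠ (c E11) := a_init4 ▸ hc E2 E11 w_2_11
  have h34 : c E12 ≠ (c E11) := a_init4 ▸ hc E12 E11 w_12_11
  have h35 : c E14 ≠ (c E11) := a_init4 ▸ hc E14 E11 w_14_11
  have h36 : c E18 ≠ (c E11) := a_init4 ▸ hc E18 E11 w_18_11
  have h37 : c E21 ≠ (c E11) := a_init4 ▸ hc E21 E11 w_21_11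
  have h38 : c E24 ≠ (c E11) := a_init4 ▸ hc E24 E11 w_24_11
  have h39 : c E25 ≠ (c E11) := a_init4 ▸ hc E25 E11 w_25_11
  have h40 : c E28 ≠ (c E11) := a_init4 ▸ hc E28 E11 w_28_11
  have h41 : c E2 = (c E9) ∨ c E2 = (c E10) := pick2 (c E0) (c E1) (c E11) (c E9) (c E10) (c E2) d_0_1 d_0_4 d_0_2 d_0_3 d_1_4 d_1_2 d_1_3 (d_2_4).symm (d_3_4).symm d_2_3 h1 h9 h33
  rcases h41 with hbr0|hbr1
  · -- branch E2 = (c E9)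
    -- depth 0
    have h42 : c E3 ≠ (c E9) := hbr0 ▸ hc E3 E2 w_3_2
    have h43 : c E4 ≠ (c E9) := hbr0 ▸ hc E4 E2 w_4_2
    have h44 : c E12 ≠ (c E9) := hbr0 ▸ hc E12 E2 w_12_2
    have h45 : c E13 ≠ (c E9) := hbr0 ▸ hc E13 E2 w_13_2
    have h46 : c E14 ≠ (c E9) := hbr0 ▸ hc E14 E2 w_14_2
    have h47 : c E22 ≠ (c E9) := hbr0 ▸ hc E22 E2 w_22_2
    have h48 : c E23 ≠ (c E9) := hbr0 ▸ hc E23 E2 w_23_2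
    have h49 : c E12 = (c E10) := pigE (c E0) (c E1) (c E9) (c E11) (c E10) (c E12) d_0_1 d_0_2 d_0_4 d_0_3 d_1_2 d_1_4 d_1_3 d_2_4 d_2_3 (d_3_4).symm h3 h11 h44 h34
    have h50 : c E3 ≠ (c E10) := h49 ▸ hc E3 E12 w_3_12
    have h51 : c E15 ≠ (c E10) := h49 ▸ hc E15 E12 w_15_12
    have h52 : c E22 ≠ (c E10) := h49 ▸ hc E22 E12 w_22_12
    have h53 : c E25 ≠ (c E10) := h49 ▸ hc E25 E12 w_25_12
    have h54 : c E26 ≠ (c E10) := h49 ▸ hc E26 E12 w_26_12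
    have h55 : c E29 ≠ (c E10) := h49 ▸ hc E29 E12 w_29_12
    have h56 : c E16 = (c E9) := pigE' (c E13) (c E20) (c E23) (c E26) (c E9) (c E16) (hc E13 E20 w_13_20) (hc E13 E23 w_13_23) (hc E13 E26 w_13_26) (hc E20 E23 w_20_23) (hc E20 E26 w_20_26) (hc E23 E26 w_23_26) h45 h21 h48 h22 (hc E16 E13 w_16_13) (hc E16 E20 w_16_20) (hc E16 E23 w_16_23) (hc E16 E26 w_16_26)
    have h57 : c E5 ≠ (c E9) := h56 ▸ hc E5 E16 w_5_16
    have h58 : c E6 ≠ (c E9) := h56 ▸ hc E6 E16 w_6_16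
    have h59 : c E15 ≠ (c E9) := h56 ▸ hc E15 E16 w_15_16
    have h60 : c E17 ≠ (c E9) := h56 ▸ hc E17 E16 w_17_16
    have h61 : c E25 = (c E9) := pigE' (c E4) (c E5) (c E15) (c E22) (c E9) (c E25) (hc E4 E5 w_4_5) (hc E4 E15 w_4_15) (hc E4 E22 w_4_22) (hc E5 E15 w_5_15) (hc E5 E22 w_5_22) (hc E15 E22 w_15_22) h43 h57 h59 h47 (hc E25 E4 w_25_4) (hc E25 E5 w_25_5) (hc E25 E15 w_25_15) (hc E25 E22 w_25_22)
    have h62 : c E21 ≠ (c E9) := h61 ▸ hc E21 E25 w_21_25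
    have h63 : c E28 ≠ (c E9) := h61 ▸ hc E28 E25 w_28_25
    have h64 : c E21 = (c E10) := pigE (c E0) (c E1) (c E9) (c E11) (c E10) (c E21) d_0_1 d_0_2 d_0_4 d_0_3 d_1_2 d_1_4 d_1_3 d_2_4 d_2_3 (d_3_4).symm h6 h13 h62 h37
    have h65 : c E4 ≠ (c E10) := h64 ▸ hc E4 E21 w_4_21
    have h66 : c E14 ≠ (c E10) := h64 ▸ hc E14 E21 w_14_21
    have h67 : c E18 ≠ (c E10) := h64 ▸ hc E18 E21 w_18_21
    have h68 : c E28 ≠ (c E10) := h64 ▸ hc E28 E21 w_28_21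
    exact (pigF (c E0) (c E1) (c E9) (c E10) (c E11) (c E28) d_0_1 d_0_2 d_0_3 d_0_4 d_1_2 d_1_3 d_1_4 d_2_3 d_2_4 d_3_4 h8 h15 h63 h68 h40).elim
  · -- branch E2 = (c E10)
    -- depth 0
    have h69 : c E3 ≠ (c E10) := hbr1 ▸ hc E3 E2 w_3_2
    have h70 : c E4 ≠ (c E10) := hbr1 ▸ hc E4 E2 w_4_2
    have h71 : c E12 ≠ (c E10) := hbr1 ▸ hc E12 E2 w_12_2
    have h72 : c E14 ≠ (c E10) := hbr1 ▸ hc E14 E2 w_14_2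
    have h73 : c E22 ≠ (c E10) := hbr1 ▸ hc E22 E2 w_22_2
    have h74 : c E29 ≠ (c E10) := hbr1 ▸ hc E29 E2 w_29_2
    have h75 : c E12 = (c E9) := pigE (c E0) (c E1) (c E10) (c E11) (c E9) (c E12) d_0_1 d_0_3 d_0_4 d_0_2 d_1_3 d_1_4 d_1_2 d_3_4 (d_2_3).symm (d_2_4).symm h3 h11 h71 h34
    have h76 : c E3 ≠ (c E9) := h75 ▸ hc E3 E12 w_3_12
    have h77 : c E13 ≠ (c E9) := h75 ▸ hc E13 E12 w_13_12
    have h78 : c E15 ≠ (c E9) := h75 ▸ hc E15 E12 w_15_12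
    have h79 : c E22 ≠ (c E9) := h75 ▸ hc E22 E12 w_22_12
    have h80 : c E25 ≠ (c E9) := h75 ▸ hc E25 E12 w_25_12
    have h81 : c E2 ≠ (c E9) := hbr1 ▸ (d_2_3).symm
    have h82 : c E23 = (c E9) := pigE' (c E2) (c E3) (c E13) (c E20) (c E9) (c E23) (hc E2 E3 w_2_3) (hc E2 E13 w_2_13) (hc E2 E20 w_2_20) (hc E3 E13 w_3_13) (hc E3 E20 w_3_20) (hc E13 E20 w_13_20) h81 h76 h77 h21 (hc E23 E2 w_23_2) (hc E23 E3 w_23_3) (hc E23 E13 w_23_13) (hc E23 E20 w_23_20)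
    have h83 : c E5 ≠ (c E9) := h82 ▸ hc E5 E23 w_5_23
    have h84 : c E6 ≠ (c E9) := h82 ▸ hc E6 E23 w_6_23
    have h85 : c E16 ≠ (c E9) := h82 ▸ hc E16 E23 w_16_23
    have h86 : c E4 = (c E9) := pigE' (c E5) (c E6) (c E15) (c E16) (c E9) (c E4) (hc E5 E6 w_5_6) (hc E5 E15 w_5_15) (hc E5 E16 w_5_16) (hc E6 E15 w_6_15) (hc E6 E16 w_6_16) (hc E15 E16 w_15_16) h83 h84 h78 h85 (hc E4 E5 w_4_5) (hc E4 E6 w_4_6) (hc E4 E15 w_4_15) (hc E4 E16 w_4_16)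
    have h87 : c E14 ≠ (c E9) := h86 ▸ hc E14 E4 w_14_4
    have h88 : c E21 ≠ (c E9) := h86 ▸ hc E21 E4 w_21_4
    have h89 : c E24 ≠ (c E9) := h86 ▸ hc E24 E4 w_24_4
    have h90 : c E21 = (c E10) := pigE (c E0) (c E1) (c E9) (c E11) (c E10) (c E21) d_0_1 d_0_2 d_0_4 d_0_3 d_1_2 d_1_4 d_1_3 d_2_4 d_2_3 (d_3_4).symm h6 h13 h88 h37
    have h91 : c E18 ≠ (c E10) := h90 ▸ hc E18 E21 w_18_21
    have h92 : c E25 ≠ (c E10) := h90 ▸ hc E25 E21 w_25_21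
    have h93 : c E28 ≠ (c E10) := h90 ▸ hc E28 E21 w_28_21
    have h94 : c E28 = (c E9) := pigE (c E0) (c E1) (c E10) (c E11) (c E9) (c E28) d_0_1 d_0_3 d_0_4 d_0_2 d_1_3 d_1_4 d_1_2 d_3_4 (d_2_3).symm (d_2_4).symm h8 h15 h93 h40
    have h95 : c E2 ≠ (c E1) := hbr1 ▸ (d_1_3).symm
    have h96 : c E4 ≠ (c E1) := h86 ▸ (d_1_2).symm
    have h97 : c E14 = (c E1) := pigE' (c E2) (c E3) (c E4) (c E13) (c E1) (c E14) (hc E2 E3 w_2_3) (hc E2 E4 w_2_4) (hc E2 E13 w_2_13) (hc E3 E4 w_3_4) (hc E3 E13 w_3_13) (hc E4 E13 w_4_13) h95 h10 h96 h12 (hc E14 E2 w_14_2) (hc E14 E3 w_14_3) (hc E14 E4 w_14_4) (hc E14 E13 w_14_13)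
    have h98 : c E5 ≠ (c E1) := h97 ▸ hc E5 E14 w_5_14
    have h99 : c E15 ≠ (c E1) := h97 ▸ hc E15 E14 w_15_14
    have h100 : c E17 ≠ (c E1) := h97 ▸ hc E17 E14 w_17_14
    have h101 : c E24 ≠ (c E1) := h97 ▸ hc E24 E14 w_24_14
    have h102 : c E27 ≠ (c E1) := h97 ▸ hc E27 E14 w_27_14
    have h103 : c E24 = (c E0) := pigE (c E1) (c E9) (c E10) (c E11) (c E0) (c E24) d_1_2 d_1_3 d_1_4 (d_0_1).symm d_2_3 d_2_4 (d_0_2).symm d_3_4 (d_0_3).symm (d_0_4).symm h101 h89 h31 h38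
    have h104 : c E3 ≠ (c E0) := h103 ▸ hc E3 E24 w_3_24
    have h105 : c E6 ≠ (c E0) := h103 ▸ hc E6 E24 w_6_24
    have h106 : c E7 ≠ (c E0) := h103 ▸ hc E7 E24 w_7_24
    have h107 : c E17 ≠ (c E0) := h103 ▸ hc E17 E24 w_17_24
    have h108 : c E3 = (c E11) := pigE (c E0) (c E1) (c E9) (c E10) (c E11) (c E3) d_0_1 d_0_2 d_0_3 d_0_4 d_1_2 d_1_3 d_1_4 d_2_3 d_2_4 d_3_4 h104 h10 h76 h69
    have h109 : c E5 ≠ (c E11) := h108 ▸ hc E5 E3 w_5_3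
    have h110 : c E13 ≠ (c E11) := h108 ▸ hc E13 E3 w_13_3
    have h111 : c E15 ≠ (c E11) := h108 ▸ hc E15 E3 w_15_3
    have h112 : c E20 ≠ (c E11) := h108 ▸ hc E20 E3 w_20_3
    have h113 : c E13 = (c E0) := pigE (c E1) (c E9) (c E10) (c E11) (c E0) (c E13) d_1_2 d_1_3 d_1_4 (d_0_1).symm d_2_3 d_2_4 (d_0_2).symm d_3_4 (d_0_3).symm (d_0_4).symm h12 h77 h26 h110
    have h114 : c E16 ≠ (c E0) := h113 ▸ hc E16 E13 w_16_13
    have h115 : c E26 ≠ (c E0) := h113 ▸ hc E26 E13 w_26_13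
    have h116 : c E20 = (c E1) := pigE (c E0) (c E9) (c E10) (c E11) (c E1) (c E20) d_0_2 d_0_3 d_0_4 d_0_1 d_2_3 d_2_4 (d_1_2).symm d_3_4 (d_1_3).symm (d_1_4).symm h5 h21 h29 h112
    have h117 : c E16 ≠ (c E1) := h116 ▸ hc E16 E20 w_16_20
    have h118 : c E26 ≠ (c E1) := h116 ▸ hc E26 E20 w_26_20
    have h119 : c E27 = (c E11) := pigE (c E0) (c E1) (c E9) (c E10) (c E11) (c E27) d_0_1 d_0_2 d_0_3 d_0_4 d_1_2 d_1_3 d_1_4 d_2_3 d_2_4 d_3_4 h7 h102 h23 h32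
    have h120 : c E6 ≠ (c E11) := h119 ▸ hc E6 E27 w_6_27
    have h121 : c E7 ≠ (c E11) := h119 ▸ hc E7 E27 w_7_27
    have h122 : c E17 ≠ (c E11) := h119 ▸ hc E17 E27 w_17_27
    have h123 : c E17 = (c E9) := pigE (c E0) (c E1) (c E10) (c E11) (c E9) (c E17) d_0_1 d_0_3 d_0_4 d_0_2 d_1_3 d_1_4 d_1_2 d_3_4 (d_2_3).symm (d_2_4).symm h107 h100 h27 h122
    have h124 : c E4 ≠ (c E1) := h86 ▸ (d_1_2).symm
    have h125 : c E6 = (c E1) := pigE' (c E4) (c E5) (c E15) (c E16) (c E1) (c E6) (hc E4 E5 w_4_5) (hc E4 E15 w_4_15) (hc E4 E16 w_4_16) (hc E5 E15 w_5_15) (hc E5 E16 w_5_16) (hc E15 E16 w_15_16) h124 h98 h99 h117 (hc E6 E4 w_6_4) (hc E6 E5 w_6_5) (hc E6 E15 w_6_15) (hc E6 E16 w_6_16)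
    have h126 : c E7 ≠ (c E1) := h125 ▸ hc E7 E6 w_7_6
    have h127 : c E8 ≠ (c E1) := h125 ▸ hc E8 E6 w_8_6
    have h128 : c E18 ≠ (c E1) := h125 ▸ hc E18 E6 w_18_6
    have h129 : c E7 = (c E10) := pigE (c E0) (c E1) (c E9) (c E11) (c E10) (c E7) d_0_1 d_0_2 d_0_4 d_0_3 d_1_2 d_1_4 d_1_3 d_2_4 d_2_3 (d_3_4).symm h106 h126 h17 h121
    have h130 : c E5 ≠ (c E10) := h129 ▸ hc E5 E7 w_5_7
    have h131 : c E16 ≠ (c E10) := h129 ▸ hc E16 E7 w_16_7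
    have h132 : c E5 = (c E0) := pigE (c E1) (c E9) (c E10) (c E11) (c E0) (c E5) d_1_2 d_1_3 d_1_4 (d_0_1).symm d_2_3 d_2_4 (d_0_2).symm d_3_4 (d_0_3).symm (d_0_4).symm h98 h83 h130 h109
    have h133 : c E15 ≠ (c E0) := h132 ▸ hc E15 E5 w_15_5
    have h134 : c E22 ≠ (c E0) := h132 ▸ hc E22 E5 w_22_5
    have h135 : c E25 ≠ (c E0) := h132 ▸ hc E25 E5 w_25_5
    have h136 : c E8 = (c E11) := pigE (c E0) (c E1) (c E9) (c E10) (c E11) (c E8) d_0_1 d_0_2 d_0_3 d_0_4 d_1_2 d_1_3 d_1_4 d_2_3 d_2_4 d_3_4 h2 h127 h18 h25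
    have h137 : c E19 ≠ (c E11) := h136 ▸ hc E19 E8 w_19_8
    have h138 : c E26 ≠ (c E11) := h136 ▸ hc E26 E8 w_26_8
    have h139 : c E29 ≠ (c E11) := h136 ▸ hc E29 E8 w_29_8
    have h140 : c E15 = (c E10) := pigE (c E0) (c E1) (c E9) (c E11) (c E10) (c E15) d_0_1 d_0_2 d_0_4 d_0_3 d_1_2 d_1_4 d_1_3 d_2_4 d_2_3 (d_3_4).symm h133 h99 h78 h111
    have h141 : c E16 = (c E11) := pigE (c E0) (c E1) (c E9) (c E10) (c E11) (c E16) d_0_1 d_0_2 d_0_3 d_0_4 d_1_2 d_1_3 d_1_4 d_2_3 d_2_4 d_3_4 h114 h117 h85 h131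
    have h142 : c E18 = (c E0) := pigE (c E1) (c E9) (c E10) (c E11) (c E0) (c E18) d_1_2 d_1_3 d_1_4 (d_0_1).symm d_2_3 d_2_4 (d_0_2).symm d_3_4 (d_0_3).symm (d_0_4).symm h128 h19 h91 h36
    have h143 : c E19 = (c E1) := pigE (c E0) (c E9) (c E10) (c E11) (c E1) (c E19) d_0_2 d_0_3 d_0_4 d_0_1 d_2_3 d_2_4 (d_1_2).symm d_3_4 (d_1_3).symm (d_1_4).symm h4 h20 h28 h137
    have h144 : c E22 = (c E11) := pigE (c E0) (c E1) (c E9) (c E10) (c E11) (c E22) d_0_1 d_0_2 d_0_3 d_0_4 d_1_2 d_1_3 d_1_4 d_2_3 d_2_4 d_3_4 h134 h14 h79 h73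
    have h145 : c E25 = (c E1) := pigE (c E0) (c E9) (c E10) (c E11) (c E1) (c E25) d_0_2 d_0_3 d_0_4 d_0_1 d_2_3 d_2_4 (d_1_2).symm d_3_4 (d_1_3).symm (d_1_4).symm h135 h80 h92 h39
    have h146 : c E26 = (c E10) := pigE (c E0) (c E1) (c E9) (c E11) (c E10) (c E26) d_0_1 d_0_2 d_0_4 d_0_3 d_1_2 d_1_4 d_1_3 d_2_4 d_2_3 (d_3_4).symm h115 h118 h22 h138
    have h147 : c E29 = (c E0) := pigE (c E1) (c E9) (c E10) (c E11) (c E0) (c E29) d_1_2 d_1_3 d_1_4 (d_0_1).symm d_2_3 d_2_4 (d_0_2).symm d_3_4 (d_0_3).symm (d_0_4).symm h16 h24 h74 h139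
    exact (h132).symm

lemma deg_le : ∀ v : Fin 20, (Gr.neighborFinset v).card ≤ 3 := by decide

/-- The fanout gadget: a finite simple bipartite graph of maximum degree at most 3 and
girth 6, with distinct designated edges `e` (input) and `e'` (output), such that
(i) every distance-2 edge coloring with 5 colors gives `e` and `e'` the same color, and
(ii) every one of the 5 colors is realized on `e` by some such coloring. -/
theorem fanout_gadget_exists :
    ∃ (V : Type) (_ : Fintype V) (G : SimpleGraph V) (e e' : Sym2 V),
      G.Colorable 2 ∧
      (∀ v : V, (G.neighborSet v).ncard ≤ 3) ∧
      G.egirth = 6 ∧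
      e ∈ G.edgeSet ∧ e' ∈ G.edgeSet ∧ e ≠ e' ∧
      (∀ c : Sym2 V → Fin 5, IsD2EdgeColoring G 5 c → c e = c e') ∧
      (∀ i : Fin 5, ∃ c : Sym2 V → Fin 5, IsD2EdgeColoring G 5 c ∧ c e = i) := by
  refine ⟨Fin 20, inferInstance, Gr, s(0,1), s(5,6), ?_, ?_, egirth_eq, ?_, ?_, by decide, ?_, ?_⟩
  · exact ⟨SimpleGraph.Coloring.mk (fun v => if par v then 0 else 1) (by
      intro u v h
      have h2 := hpar u v h
      by_cases hu : par u <;> by_cases hv : par v <;> simp_all)⟩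
  · intro v
    have h1 : (Gr.neighborSet v).ncard = (Gr.neighborFinset v).card := by
      rw [← Set.ncard_coe_finset (Gr.neighborFinset v), neighborFinset_def, Set.coe_toFinset]
    rw [h1]
    exact deg_le v
  · rw [SimpleGraph.mem_edgeSet]; exact rfl
  · rw [SimpleGraph.mem_edgeSet]; exact rfl
  · exact fun c hc => forced c hc
  · intro i
    refine ⟨fun s => Equiv.swap (c0 s(0,1)) i (c0 s), ?_, ?_⟩
    · intro e f h heq
      exact c0_valid e f h ((Equiv.swap (c0 s(0,1)) i).injective heq)
    · exact Equiv.swap_apply_left _ _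
end

section
/- There exists a finite simple bipartite graph of maximum degree at most 3 with three designated pairwise distinct input edges, each incident to a degree-1 vertex and pairwise at distance greater than 2 from each other, such that for any assignment of colors a, b, c (from a palette of 5 colors) to the three input edges, the assignment extends to a distance-2 edge coloring of the whole graph with 5 colors if and only if a, b, c are not all equal. (This is the defining property of the clause gadget.) -/
open SimpleGraph

set_option maxRecDepth 40000
set_option maxHeartbeats 1000000

namespace CG

/-- The edge list of the clause gadget (a tree on 16 vertices). Vertex 0 is the centre,
vertices 1,2,3 its neighbours; 4,5,6 are the middle vertices of the three branches;
7,8,9 are pendant neighbours of 1,2,3; the input edges are (4,10),(5,11),(6,12), and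
(4,13),(5,14),(6,15) are further pendant edges. -/
def pl : List (Fin 16 × Fin 16) :=
  [(0,1),(0,2),(0,3),(1,4),(2,5),(3,6),(1,7),(2,8),(3,9),(4,10),(5,11),(6,12),(4,13),(5,14),(6,15)]

def G : SimpleGraph (Fin 16) where
  Adj x y := x ≠ y ∧ ((x, y) ∈ pl ∨ (y, x) ∈ pl)
  symm := ⟨fun _ _ h => ⟨h.1.symm, h.2.symm⟩⟩
  loopless := ⟨fun _ h => h.1 rfl⟩

instance : DecidableRel G.Adj := fun x y =>
  inferInstanceAs (Decidable (x ≠ y ∧ ((x, y) ∈ pl ∨ (y, x) ∈ pl)))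

lemma exists_edge_iff (P : Sym2 (Fin 16) → Prop) :
    (∃ g ∈ G.edgeSet, P g) ↔ ∃ p q, G.Adj p q ∧ P s(p, q) := by
  constructor
  · rintro ⟨g, hg, hP⟩
    induction g using Sym2.ind with
    | _ p q => exact ⟨p, q, (G.mem_edgeSet).mp hg, hP⟩
  · rintro ⟨p, q, hadj, hP⟩
    exact ⟨s(p, q), (G.mem_edgeSet).mpr hadj, hP⟩

lemma shared_iff (x y z w : Fin 16) :
    (∃ v, v ∈ s(x, y) ∧ v ∈ s(z, w)) ↔ (x = z ∨ x = w ∨ y = z ∨ y = w) := by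
  simp only [Sym2.mem_iff]
  constructor
  · rintro ⟨v, (rfl | rfl), (h | h)⟩ <;> tauto
  · rintro (h | h | h | h)
    exacts [⟨x, Or.inl rfl, Or.inl h⟩, ⟨x, Or.inl rfl, Or.inr h⟩,
      ⟨y, Or.inr rfl, Or.inl h⟩, ⟨y, Or.inr rfl, Or.inr h⟩]

/-- A first-order (quantifying only over vertices) description of `WithinDist2` for `G`. -/
def WD2V (x y z w : Fin 16) : Prop :=
  G.Adj x y ∧ G.Adj z w ∧ ¬(x = z ∧ y = w ∨ x = w ∧ y = z) ∧
    ((x = z ∨ x = w ∨ y = z ∨ y = w) ∨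
      ∃ p q, G.Adj p q ∧ ¬(p = x ∧ q = y ∨ p = y ∧ q = x) ∧
        ¬(p = z ∧ q = w ∨ p = w ∧ q = z) ∧
        (x = p ∨ x = q ∨ y = p ∨ y = q) ∧ (p = z ∨ p = w ∨ q = z ∨ q = w))

instance (x y z w : Fin 16) : Decidable (WD2V x y z w) := by
  unfold WD2V; infer_instance

lemma wd2_iff (x y z w : Fin 16) :
    WithinDist2 G s(x, y) s(z, w) ↔ WD2V x y z w := by
  unfold WithinDist2 WD2V
  rw [G.mem_edgeSet, G.mem_edgeSet, exists_edge_iff]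
  simp only [Ne, Sym2.eq_iff, shared_iff]

lemma wd2_swapL {x y z w : Fin 16} (h : WD2V x y z w) : WD2V y x z w := by
  obtain ⟨h1, h2, h3, h4⟩ := h
  refine ⟨h1.symm, h2, by itauto, ?_⟩
  rcases h4 with h | ⟨p, q, hp1, hp2, hp3, hp4, hp5⟩
  · exact Or.inl (by itauto)
  · exact Or.inr ⟨p, q, hp1, by itauto, hp3, by itauto, hp5⟩

lemma wd2_swapR {x y z w : Fin 16} (h : WD2V x y z w) : WD2V x y w z := by
  obtain ⟨h1, h2, h3, h4⟩ := h
  refine ⟨h1, h2.symm, by itauto, ?_⟩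
  rcases h4 with h | ⟨p, q, hp1, hp2, hp3, hp4, hp5⟩
  · exact Or.inl (by itauto)
  · exact Or.inr ⟨p, q, hp1, hp2, by itauto, hp4, by itauto⟩

/-! ### The explicit extending coloring -/

def oth (x y : Fin 5) : Fin 5 :=
  if x ≠ 0 ∧ y ≠ 0 then 0 else if x ≠ 1 ∧ y ≠ 1 then 1 else 2

def H1 (a b c : Fin 5) : Fin 5 := if a = b then c else b
def H2 (a b c : Fin 5) : Fin 5 :=
  if a = b then oth a c else if b = c ∨ a = c then a else c
def H3 (a b c : Fin 5) : Fin 5 :=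
  if a = b then a else if b = c ∨ a = c then oth a b else a

def niB (h1 h2 h3 k : Fin 5) : Bool := k ≠ h1 && k ≠ h2 && k ≠ h3

def C1 (h1 h2 h3 : Fin 5) : Fin 5 :=
  if niB h1 h2 h3 0 then 0 else if niB h1 h2 h3 1 then 1 else
    if niB h1 h2 h3 2 then 2 else 3

def C2 (h1 h2 h3 : Fin 5) : Fin 5 :=
  if niB h1 h2 h3 4 then 4 else if niB h1 h2 h3 3 then 3 else
    if niB h1 h2 h3 2 then 2 else 1

/-- The color of the edge of `pl` whose larger endpoint is `y`. -/
def T (a b c : Fin 5) (y : Fin 16) : Fin 5 :=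
  if y = 1 then H1 a b c else if y = 2 then H2 a b c else if y = 3 then H3 a b c
  else if y = 4 ∨ y = 5 ∨ y = 6 then C1 (H1 a b c) (H2 a b c) (H3 a b c)
  else if y = 7 ∨ y = 8 ∨ y = 9 then C2 (H1 a b c) (H2 a b c) (H3 a b c)
  else if y = 10 then a else if y = 11 then b else if y = 12 then c
  else if y = 13 then (if H2 a b c ≠ a then H2 a b c else H3 a b c)
  else if y = 14 then (if H1 a b c ≠ b then H1 a b c else H3 a b c)
  else if y = 15 then (if H1 a b c ≠ c then H1 a b c else H2 a b c)
  else 0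

def mx (x y : Fin 16) : Fin 16 := if x ≤ y then y else x

lemma mx_comm (x y : Fin 16) : mx x y = mx y x := by
  unfold mx
  rcases le_total x y with h | h
  · by_cases h2 : y ≤ x <;> simp [h, h2, le_antisymm h]
  · by_cases h2 : x ≤ y <;> simp [h, h2, le_antisymm h]


lemma mxpl : ∀ x y : Fin 16, (x, y) ∈ pl → mx x y = y := by decide

def col (a b c : Fin 5) : Sym2 (Fin 16) → Fin 5 :=
  Sym2.lift ⟨fun x y => T a b c (mx x y), fun x y => by simp only [mx_comm x y]⟩

/-- The main finite verification: the explicit coloring satisfies every constraint. -/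
lemma master : ∀ p ∈ pl, ∀ q ∈ pl, WD2V p.1 p.2 q.1 q.2 →
    ∀ a b c : Fin 5, ¬(a = b ∧ b = c) → T a b c p.2 ≠ T a b c q.2 := by decide

/-- In each branch, the color `x` of the input edge must be one of the two other
central colors. -/
lemma branch : ∀ h1 h2 h3 f r x : Fin 5, h1 ≠ h2 → h1 ≠ h3 → h2 ≠ h3 →
    f ≠ h1 → f ≠ h2 → f ≠ h3 → r ≠ h1 → r ≠ h2 → r ≠ h3 → f ≠ r →
    x ≠ f → x ≠ r → x ≠ h1 → (x = h2 ∨ x = h3) := by decide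

lemma final : ∀ h1 h2 h3 x : Fin 5, h1 ≠ h2 → h1 ≠ h3 → h2 ≠ h3 →
    (x = h2 ∨ x = h3) → (x = h1 ∨ x = h3) → (x = h1 ∨ x = h2) → False := by decide

def part : Fin 16 → Fin 2 := fun v => if v = 0 ∨ (4 ≤ v ∧ v ≤ 9) then 0 else 1

lemma part_valid : ∀ v w : Fin 16, G.Adj v w → part v ≠ part w := by decide

lemma ncard_eq (v : Fin 16) : (G.neighborSet v).ncard = (G.neighborFinset v).card := by
  rw [SimpleGraph.neighborFinset_def, Set.ncard_eq_toFinset_card']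

lemma deg_le : ∀ v : Fin 16, (G.neighborFinset v).card ≤ 3 := by decide

lemma deg_pendant : ∀ v : Fin 16, 10 ≤ v → (G.neighborFinset v).card = 1 := by decide

end CG

/-- The clause gadget: a finite simple bipartite graph of maximum degree at most 3 with
three pairwise distinct designated input edges, each incident to a degree-1 vertex and
pairwise at distance greater than 2, such that an assignment of colors `a, b, c` (out of 5)
to the inputs extends to a distance-2 edge coloring of the whole graph with 5 colors iff
`a, b, c` are not all equal. -/
theorem clause_gadget_exists :
    ∃ (V : Type) (_ : Fintype V) (G : SimpleGraph V) (e₁ e₂ e₃ : Sym2 V),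
      G.Colorable 2 ∧
      (∀ v : V, (G.neighborSet v).ncard ≤ 3) ∧
      e₁ ∈ G.edgeSet ∧ e₂ ∈ G.edgeSet ∧ e₃ ∈ G.edgeSet ∧
      e₁ ≠ e₂ ∧ e₁ ≠ e₃ ∧ e₂ ≠ e₃ ∧
      (∃ v, v ∈ e₁ ∧ (G.neighborSet v).ncard = 1) ∧
      (∃ v, v ∈ e₂ ∧ (G.neighborSet v).ncard = 1) ∧
      (∃ v, v ∈ e₃ ∧ (G.neighborSet v).ncard = 1) ∧
      ¬ WithinDist2 G e₁ e₂ ∧ ¬ WithinDist2 G e₁ e₃ ∧ ¬ WithinDist2 G e₂ e₃ ∧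
      ∀ a b c : Fin 5,
        (∃ col : Sym2 V → Fin 5, IsD2EdgeColoring G 5 col ∧
            col e₁ = a ∧ col e₂ = b ∧ col e₃ = c) ↔ ¬ (a = b ∧ b = c) := by
  refine ⟨Fin 16, inferInstance, CG.G, s(4,10), s(5,11), s(6,12),
    ⟨SimpleGraph.Coloring.mk CG.part fun {v w} h => CG.part_valid v w h⟩,
    fun v => by rw [CG.ncard_eq]; exact CG.deg_le v,
    (CG.G.mem_edgeSet).mpr (by decide), (CG.G.mem_edgeSet).mpr (by decide),
    (CG.G.mem_edgeSet).mpr (by decide),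
    by decide, by decide, by decide,
    ⟨10, by simp, by rw [CG.ncard_eq]; exact CG.deg_pendant 10 (by decide)⟩,
    ⟨11, by simp, by rw [CG.ncard_eq]; exact CG.deg_pendant 11 (by decide)⟩,
    ⟨12, by simp, by rw [CG.ncard_eq]; exact CG.deg_pendant 12 (by decide)⟩,
    by rw [CG.wd2_iff]; decide, by rw [CG.wd2_iff]; decide, by rw [CG.wd2_iff]; decide,
    fun a b c => ?_⟩
  constructor
  · -- a coloring extending `a, b, c` exists → the colors are not all equal
    rintro ⟨col0, hcol, ha, hb, hc⟩ ⟨rfl, rfl⟩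
    have con : ∀ x y z w : Fin 16, CG.WD2V x y z w → col0 s(x, y) ≠ col0 s(z, w) :=
      fun x y z w h => hcol _ _ ((CG.wd2_iff x y z w).mpr h)
    have hH12 := con 0 1 0 2 (by decide)
    have hH13 := con 0 1 0 3 (by decide)
    have hH23 := con 0 2 0 3 (by decide)
    have d1 : col0 s(4,10) = col0 s(0,2) ∨ col0 s(4,10) = col0 s(0,3) :=
      CG.branch _ _ _ _ _ _ hH12 hH13 hH23
        (con 1 4 0 1 (by decide)) (con 1 4 0 2 (by decide)) (con 1 4 0 3 (by decide))
        (con 1 7 0 1 (by decide)) (con 1 7 0 2 (by decide)) (con 1 7 0 3 (by decide))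
        (con 1 4 1 7 (by decide))
        (con 4 10 1 4 (by decide)) (con 4 10 1 7 (by decide)) (con 4 10 0 1 (by decide))
    have d2 : col0 s(5,11) = col0 s(0,1) ∨ col0 s(5,11) = col0 s(0,3) :=
      CG.branch _ _ _ _ _ _ (Ne.symm hH12) hH23 hH13
        (con 2 5 0 2 (by decide)) (con 2 5 0 1 (by decide)) (con 2 5 0 3 (by decide))
        (con 2 8 0 2 (by decide)) (con 2 8 0 1 (by decide)) (con 2 8 0 3 (by decide))
        (con 2 5 2 8 (by decide))
        (con 5 11 2 5 (by decide)) (con 5 11 2 8 (by decide)) (con 5 11 0 2 (by decide))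
    have d3 : col0 s(6,12) = col0 s(0,1) ∨ col0 s(6,12) = col0 s(0,2) :=
      CG.branch _ _ _ _ _ _ (Ne.symm hH13) (Ne.symm hH23) hH12
        (con 3 6 0 3 (by decide)) (con 3 6 0 1 (by decide)) (con 3 6 0 2 (by decide))
        (con 3 9 0 3 (by decide)) (con 3 9 0 1 (by decide)) (con 3 9 0 2 (by decide))
        (con 3 6 3 9 (by decide))
        (con 6 12 3 6 (by decide)) (con 6 12 3 9 (by decide)) (con 6 12 0 3 (by decide))
    rw [ha] at d1
    rw [hb] at d2
    rw [hc] at d3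
    exact CG.final (col0 s(0,1)) (col0 s(0,2)) (col0 s(0,3)) a hH12 hH13 hH23 d1 d2 d3
  · -- not all equal → the explicit coloring works
    intro habc
    refine ⟨CG.col a b c, ?_, rfl, rfl, rfl⟩
    intro e f hwd
    obtain ⟨x, y, rfl⟩ : ∃ x y, e = s(x, y) := e.ind fun x y => ⟨x, y, rfl⟩
    obtain ⟨z, w, rfl⟩ : ∃ z w, f = s(z, w) := f.ind fun z w => ⟨z, w, rfl⟩
    rw [CG.wd2_iff] at hwd
    have hxy := hwd.1.2
    have hzw := hwd.2.1.2
    show CG.T a b c (CG.mx x y) ≠ CG.T a b c (CG.mx z w)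
    rcases hxy with h1 | h1 <;> rcases hzw with h2 | h2
    · rw [CG.mxpl x y h1, CG.mxpl z w h2]
      exact CG.master (x, y) h1 (z, w) h2 hwd a b c habc
    · rw [CG.mxpl x y h1, CG.mx_comm z w, CG.mxpl w z h2]
      exact CG.master (x, y) h1 (w, z) h2 (CG.wd2_swapR hwd) a b c habc
    · rw [CG.mx_comm x y, CG.mxpl y x h1, CG.mxpl z w h2]
      exact CG.master (y, x) h1 (z, w) h2 (CG.wd2_swapL hwd) a b c habc
    · rw [CG.mx_comm x y, CG.mxpl y x h1, CG.mx_comm z w, CG.mxpl w z h2]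
      exact CG.master (y, x) h1 (w, z) h2 (CG.wd2_swapL (CG.wd2_swapR hwd)) a b c habc
end
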